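/- arXiv:0901.1620 — 4 statements merged into one kernel-verified Lean document; each statement's English description precedes it below -/
import Mathlib

section
/- Let x₁ < x₂ < ⋯ < x_{n₀} be the zeros of an orthogonal polynomial S_{n₀} of degree n₀ with respect to a probability measure σ on ℝ, and fix 1 ≤ k₀ ≤ n₀. Let P be the unique polynomial of degree ≤ 2n₀-2 satisfying P(x_k) = 0 for k < k₀, P(x_k) = 1 for k ≥ k₀, and P'(x_k) = 0 for all k ≠ k₀. Then P(x) ≥ 1 for all x ≥ x_{k₀} and P(x) ≥ 0 for all x < x_{k₀}; in particular P ≥ 𝟙_{[x_{k₀},∞)} on ℝ. -/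
open Polynomial Set

lemma contP (P : Polynomial ℝ) : Continuous fun t => P.eval t := P.continuous

lemma rolle_poly (P : Polynomial ℝ) {a b : ℝ} (hab : a < b)
    (h : P.eval a = P.eval b) : ∃ z ∈ Set.Ioo a b, P.derivative.eval z = 0 := by
  obtain ⟨c, hc, hc0⟩ := exists_deriv_eq_zero hab (contP P).continuousOn h
  exact ⟨c, hc, by rwa [Polynomial.deriv] at hc0⟩

lemma mvt_poly (P : Polynomial ℝ) {a b : ℝ} (hab : a < b) :
    ∃ z ∈ Set.Ioo a b, P.derivative.eval z = (P.eval b - P.eval a) / (b - a) := by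
  obtain ⟨c, hc, hc0⟩ := exists_deriv_eq_slope (fun t => P.eval t) hab
    (contP P).continuousOn (P.differentiable.differentiableOn)
  exact ⟨c, hc, by rwa [Polynomial.deriv] at hc0⟩

lemma le_of_deriv_pos (P : Polynomial ℝ) {a b : ℝ}
    (h : ∀ t ∈ Set.Ioo a b, 0 < P.derivative.eval t) (hab : a ≤ b) :
    P.eval a ≤ P.eval b := by
  rcases eq_or_lt_of_le hab with rfl | hab
  · exact le_refl _
  have := strictMonoOn_of_deriv_pos (convex_Icc a b) (contP P).continuousOn
    (fun t ht => by
      rw [interior_Icc] at ht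
      rw [Polynomial.deriv]
      exact h t ht)
  exact (this (left_mem_Icc.2 hab.le) (right_mem_Icc.2 hab.le) hab).le

lemma le_of_deriv_neg (P : Polynomial ℝ) {a b : ℝ}
    (h : ∀ t ∈ Set.Ioo a b, P.derivative.eval t < 0) (hab : a ≤ b) :
    P.eval b ≤ P.eval a := by
  rcases eq_or_lt_of_le hab with rfl | hab
  · exact le_refl _
  have := strictAntiOn_of_deriv_neg (convex_Icc a b) (contP P).continuousOn
    (fun t ht => by
      rw [interior_Icc] at ht
      rw [Polynomial.deriv]
      exact h t ht)
  exact (this (left_mem_Icc.2 hab.le) (right_mem_Icc.2 hab.le) hab).le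

lemma prod_sign (F : Finset ℝ) (y : ℝ) (hy : y ∉ F) :
    0 < (-1 : ℝ) ^ ((F.filter (fun z => y < z)).card) * ∏ z ∈ F, (y - z) := by
  classical
  rw [← Finset.prod_filter_mul_prod_filter_not F (fun z => y < z)]
  have h1 : ∏ z ∈ F.filter (fun z => y < z), (y - z)
      = (-1 : ℝ) ^ ((F.filter (fun z => y < z)).card) * ∏ z ∈ F.filter (fun z => y < z), (z - y) := by
    rw [← Finset.prod_const, ← Finset.prod_mul_distrib]
    exact Finset.prod_congr rfl (fun z hz => by ring)
  have h2 : (0:ℝ) < ∏ z ∈ F.filter (fun z => y < z), (z - y) :=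
    Finset.prod_pos (fun z hz => by
      have := (Finset.mem_filter.1 hz).2; linarith)
  have h3 : (0:ℝ) < ∏ z ∈ F.filter (fun z => ¬ y < z), (y - z) :=
    Finset.prod_pos (fun z hz => by
      have h4 := (Finset.mem_filter.1 hz).2
      have h5 : z ≠ y := fun e => hy (e ▸ (Finset.mem_filter.1 hz).1)
      have : z < y := lt_of_le_of_ne (not_lt.1 h4) h5
      linarith)
  have h6 : ((-1 : ℝ) ^ ((F.filter (fun z => y < z)).card)) * ((-1 : ℝ) ^ ((F.filter (fun z => y < z)).card)) = 1 := by
    rw [← pow_add, ← two_mul, pow_mul]; norm_num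
  rw [h1]
  nlinarith [mul_pos h2 h3, h6]

lemma card_filter_fin {n : ℕ} (p : ℕ → Prop) [DecidablePred p] :
    ((Finset.univ : Finset (Fin n)).filter (fun j => p j.val)).card
      = ((Finset.range n).filter p).card := by
  rw [Finset.card_filter, Finset.card_filter,
    ← Fin.sum_univ_eq_sum_range (fun i => if p i then 1 else 0) n]

theorem cms_key (n₀ : ℕ) (x : Fin n₀ → ℝ) (hx : StrictMono x)
    (k₀ : Fin n₀) (P : Polynomial ℝ) (hPdeg : P.degree ≤ (2 * n₀ - 2 : ℕ))
    (hPval : ∀ k, P.eval (x k) = if k₀ ≤ k then 1 else 0)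
    (hPder : ∀ k, k ≠ k₀ → (Polynomial.derivative P).eval (x k) = 0) :
    (∀ y : ℝ, x k₀ ≤ y → 1 ≤ P.eval y) ∧ (∀ y : ℝ, y < x k₀ → 0 ≤ P.eval y) := by
  classical
  set m : ℕ := (k₀ : ℕ) with hmdef
  have hm : m < n₀ := k₀.isLt
  -- the extended node function
  set xe : ℕ → ℝ := fun j => if h : j < n₀ then x ⟨j, h⟩ else 0 with hxe
  have hxeval : ∀ (j : ℕ) (hj : j < n₀), xe j = x ⟨j, hj⟩ := by
    intro j hj; simp [hxe, hj]
  have hxm : xe m = x k₀ := by rw [hxeval m hm]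
  have hlt : ∀ (i j : ℕ) (hi : i < n₀) (hj : j < n₀), i < j → xe i < xe j := by
    intro i j hi hj hij
    rw [hxeval i hi, hxeval j hj]
    exact hx (by simpa [Fin.lt_def] using hij)
  have hle : ∀ (i j : ℕ) (hi : i < n₀) (hj : j < n₀), i ≤ j → xe i ≤ xe j := by
    intro i j hi hj hij
    rcases eq_or_lt_of_le hij with rfl | h
    · exact le_refl _
    · exact (hlt i j hi hj h).le
  have hv1 : ∀ (j : ℕ) (hj : j < n₀), m ≤ j → P.eval (xe j) = 1 := by
    intro j hj hmj
    rw [hxeval j hj, hPval]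
    have hk : k₀ ≤ (⟨j, hj⟩ : Fin n₀) := by rw [Fin.le_def]; exact hmj
    simp [hk]
  have hv0 : ∀ (j : ℕ) (hj : j < n₀), j < m → P.eval (xe j) = 0 := by
    intro j hj hmj
    rw [hxeval j hj, hPval]
    have : ¬ (k₀ ≤ ⟨j, hj⟩) := by rw [Fin.le_def]; simpa using (by omega : ¬ m ≤ j)
    simp [this]
  have hd0 : ∀ (j : ℕ) (hj : j < n₀), j ≠ m → P.derivative.eval (xe j) = 0 := by
    intro j hj hjm
    rw [hxeval j hj]
    exact hPder _ (by simpa [Fin.ext_iff] using hjm)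
  -- Rolle points
  have hrolle : ∀ (k : ℕ) (h1 : k + 1 < n₀), k + 1 ≠ m →
      ∃ z, (xe k < z ∧ z < xe (k+1)) ∧ P.derivative.eval z = 0 := by
    intro k h1 h2
    have hk : k < n₀ := by omega
    have hv : P.eval (xe k) = P.eval (xe (k+1)) := by
      by_cases hc : m ≤ k
      · rw [hv1 k hk hc, hv1 (k+1) h1 (by omega)]
      · rw [hv0 k hk (by omega), hv0 (k+1) h1 (by omega)]
    obtain ⟨z, hz, hz0⟩ := rolle_poly P (hlt k (k+1) hk h1 (by omega)) hv
    exact ⟨z, ⟨hz.1, hz.2⟩, hz0⟩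
  set ξ : ℕ → ℝ := fun k =>
    if h : k + 1 < n₀ ∧ k + 1 ≠ m then (hrolle k h.1 h.2).choose else 0 with hξdef
  have hξ : ∀ (k : ℕ) (h1 : k + 1 < n₀) (h2 : k + 1 ≠ m),
      (xe k < ξ k ∧ ξ k < xe (k+1)) ∧ P.derivative.eval (ξ k) = 0 := by
    intro k h1 h2
    have : ξ k = (hrolle k h1 h2).choose := by simp [hξdef, h1, h2]
    rw [this]
    exact (hrolle k h1 h2).choose_spec
  -- the finsets
  set IA : Finset ℕ := (Finset.range n₀).filter (fun j => j ≠ m) with hIA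
  set A : Finset ℝ := IA.image xe with hA
  set IB : Finset ℕ := (Finset.range (n₀ - 1)).filter (fun k => k + 1 ≠ m) with hIB
  set B : Finset ℝ := IB.image ξ with hB
  set T : Finset ℝ := A ∪ B with hT
  have hIBmem : ∀ k ∈ IB, k + 1 < n₀ ∧ k + 1 ≠ m := by
    intro k hk
    rw [hIB, Finset.mem_filter, Finset.mem_range] at hk
    exact ⟨by omega, hk.2⟩
  have hIAmem : ∀ j ∈ IA, j < n₀ ∧ j ≠ m := by
    intro j hj
    rw [hIA, Finset.mem_filter, Finset.mem_range] at hj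
    exact hj
  have hxeinj : ∀ s : Finset ℕ, (∀ j ∈ s, j < n₀) → Set.InjOn xe s := by
    intro s hs a ha b hb hab
    by_contra hne
    rcases Nat.lt_or_ge a b with h | h
    · exact absurd hab (ne_of_lt (hlt a b (hs a ha) (hs b hb) h))
    · exact absurd hab.symm (ne_of_lt (hlt b a (hs b hb) (hs a ha) (by omega)))
  have hAcard : A.card = n₀ - 1 := by
    rw [hA, Finset.card_image_of_injOn (hxeinj IA (fun j hj => (hIAmem j hj).1)), hIA]
    rw [show (Finset.range n₀).filter (fun j => j ≠ m) = (Finset.range n₀).erase m by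
      ext j; simp only [Finset.mem_filter, Finset.mem_range, Finset.mem_erase]; omega]
    rw [Finset.card_erase_of_mem (by rw [Finset.mem_range]; omega), Finset.card_range]
  have hξinj : Set.InjOn ξ IB := by
    intro a ha b hb hab
    by_contra hne
    rcases Nat.lt_or_ge a b with h | h
    · obtain ⟨h1, h2⟩ := hIBmem a ha
      obtain ⟨h3, h4⟩ := hIBmem b hb
      have e1 := (hξ a h1 h2).1
      have e2 := (hξ b h3 h4).1
      have : xe (a+1) ≤ xe b := hle _ _ h1 (by omega) (by omega)
      linarith [e1.2, e2.1]
    · have h' : b < a := by omega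
      obtain ⟨h1, h2⟩ := hIBmem a ha
      obtain ⟨h3, h4⟩ := hIBmem b hb
      have e1 := (hξ a h1 h2).1
      have e2 := (hξ b h3 h4).1
      have : xe (b+1) ≤ xe a := hle _ _ h3 (by omega) (by omega)
      linarith [e1.1, e2.2]
  have hBcard : B.card = IB.card := Finset.card_image_of_injOn hξinj
  have hABdisj : Disjoint A B := by
    rw [Finset.disjoint_left]
    intro z hzA hzB
    rw [hA, Finset.mem_image] at hzA
    rw [hB, Finset.mem_image] at hzB
    obtain ⟨j, hj1, hj2⟩ := hzA
    obtain ⟨k, hk1, hk2⟩ := hzB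
    obtain ⟨hj3, _⟩ := hIAmem j hj1
    obtain ⟨h1, h2⟩ := hIBmem k hk1
    have e := (hξ k h1 h2).1
    rw [hk2, ← hj2] at e
    have c1 : k < j := by
      by_contra hc
      exact absurd e.1 (not_lt.2 (hle _ _ hj3 (by omega) (by omega)))
    have c2 : j < k + 1 := by
      by_contra hc
      exact absurd e.2 (not_lt.2 (hle _ _ h1 hj3 (by omega)))
    omega
  have hTcard : T.card = (n₀ - 1) + IB.card := by
    rw [hT, Finset.card_union_of_disjoint hABdisj, hAcard, hBcard]
  have hTroot : ∀ z ∈ T, P.derivative.eval z = 0 := by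
    intro z hz
    rw [hT, Finset.mem_union] at hz
    rcases hz with hz | hz
    · rw [hA, Finset.mem_image] at hz
      obtain ⟨j, hj1, hj2⟩ := hz
      obtain ⟨hj3, hj4⟩ := hIAmem j hj1
      rw [← hj2]
      exact hd0 j hj3 hj4
    · rw [hB, Finset.mem_image] at hz
      obtain ⟨k, hk1, hk2⟩ := hz
      obtain ⟨h1, h2⟩ := hIBmem k hk1
      rw [← hk2]
      exact (hξ k h1 h2).2
  have hndP : P.natDegree ≤ 2 * n₀ - 2 := natDegree_le_iff_degree_le.2 hPdeg
  have hndP' : P.derivative.natDegree ≤ 2 * n₀ - 3 := by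
    have := Polynomial.natDegree_derivative_le P
    omega
  have hTle : P.derivative ≠ 0 → T.val ≤ P.derivative.roots := by
    intro h0
    rw [Multiset.le_iff_count]
    intro z
    by_cases hz : z ∈ T
    · rw [Multiset.count_eq_one_of_mem T.nodup hz, Polynomial.count_roots]
      exact (Polynomial.rootMultiplicity_pos h0).2 (hTroot z hz)
    · rw [Multiset.count_eq_zero_of_notMem (fun hc => hz hc)]
      exact Nat.zero_le _
  -- value of P when constant
  have hPC : P.natDegree = 0 → ∀ y : ℝ, P.eval y = 1 := by
    intro hp y
    have he := Polynomial.eq_C_of_natDegree_eq_zero hp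
    have h1 := hPval k₀
    rw [if_pos (le_refl k₀)] at h1
    rw [he, eval_C] at h1
    rw [he, eval_C, h1]
  rw [← hxm]
  by_cases hm0 : m = 0
  · -- degenerate case : P ≡ 1
    have hP1 : ∀ y : ℝ, P.eval y = 1 := by
      by_cases hn1 : n₀ = 1
      · apply hPC
        have : P.degree ≤ (0 : ℕ) := by
          rw [hn1] at hPdeg; simpa using hPdeg
        have := Polynomial.natDegree_le_iff_degree_le.2 this
        omega
      · have hn2 : 2 ≤ n₀ := by omega
        have hIBcard : IB.card = n₀ - 1 := by
          rw [hIB]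
          rw [Finset.filter_true_of_mem (fun k _ => by omega), Finset.card_range]
        have hP'0 : P.derivative = 0 := by
          by_contra h0
          have h1 := Multiset.card_le_card (hTle h0)
          have h2 := Polynomial.card_roots' P.derivative
          have h3 : Multiset.card T.val = T.card := rfl
          rw [h3, hTcard, hIBcard] at h1
          omega
        exact hPC (natDegree_eq_zero_of_derivative_eq_zero hP'0)
    constructor
    · intro y _; rw [hP1 y]
    · intro y _; rw [hP1 y]; norm_num
  -- main case : 1 ≤ m
  have hm1 : 1 ≤ m := by omega
  have hn2 : 2 ≤ n₀ := by omega
  have hIBcard : IB.card = n₀ - 2 := by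
    rw [hIB]
    have he : (Finset.range (n₀-1)).filter (fun k => k + 1 ≠ m)
        = (Finset.range (n₀-1)).erase (m-1) := by
      ext k
      simp only [Finset.mem_filter, Finset.mem_range, Finset.mem_erase]
      omega
    rw [he, Finset.card_erase_of_mem (by rw [Finset.mem_range]; omega), Finset.card_range]
    omega
  have hP'ne : P.derivative ≠ 0 := by
    intro h0
    have h1 := hPC (natDegree_eq_zero_of_derivative_eq_zero h0) (xe 0)
    rw [hv0 0 (by omega) (by omega)] at h1
    norm_num at h1
  have hTcard' : T.card = 2*n₀ - 3 := by rw [hTcard, hIBcard]; omega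
  have hTroots : P.derivative.roots = T.val := by
    refine (Multiset.eq_of_le_of_card_le (hTle hP'ne) ?_).symm
    have h2 := Polynomial.card_roots' P.derivative
    have h3 : Multiset.card T.val = T.card := rfl
    rw [h3, hTcard']
    omega
  have hndeq : P.derivative.natDegree = 2*n₀ - 3 := by
    have h1 := Polynomial.card_roots' P.derivative
    rw [hTroots] at h1
    have h3 : Multiset.card T.val = T.card := rfl
    rw [h3, hTcard'] at h1
    omega
  set c : ℝ := P.derivative.leadingCoeff with hcdef
  have hfac := Polynomial.C_leadingCoeff_mul_prod_multiset_X_sub_C (p := P.derivative)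
    (by rw [hTroots, hndeq]; exact hTcard')
  have heval : ∀ y : ℝ, P.derivative.eval y = c * ∏ z ∈ T, (y - z) := by
    intro y
    conv_lhs => rw [← hfac]
    rw [hTroots, eval_mul, eval_C, Polynomial.eval_multiset_prod, Multiset.map_map,
      Finset.prod_eq_multiset_prod]
    congr 1
    congr 1
    apply Multiset.map_congr rfl
    intro z _
    simp
  set N : ℝ → ℕ := fun y => (T.filter (fun z => y < z)).card with hN
  have hsgn : ∀ y, y ∉ T → (0 < c ↔ 0 < (-1:ℝ)^(N y) * P.derivative.eval y) := by
    intro y hy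
    have hq := prod_sign T y hy
    rw [heval y]
    constructor
    · intro hcc
      have he2 : (-1:ℝ)^(N y) * (c * ∏ z ∈ T, (y - z))
          = c * ((-1:ℝ)^(N y) * ∏ z ∈ T, (y - z)) := by ring
      rw [he2]
      exact mul_pos hcc hq
    · intro h
      have he2 : (-1:ℝ)^(N y) * (c * ∏ z ∈ T, (y - z))
          = c * ((-1:ℝ)^(N y) * ∏ z ∈ T, (y - z)) := by ring
      rw [he2] at h
      exact (mul_pos_iff_of_pos_right hq).1 h
  -- counting lemmas
  have hNA : ∀ (y : ℝ) (cut : ℕ), (∀ j, j < n₀ → j < cut → xe j < y) →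
      (∀ j, j < n₀ → cut ≤ j → y < xe j) →
      y ∉ A ∧ (A.filter (fun z => y < z)).card = ((Finset.Ico cut n₀).erase m).card := by
    intro y cut hdn hup
    constructor
    · intro hyA
      rw [hA, Finset.mem_image] at hyA
      obtain ⟨j, hj1, hj⟩ := hyA
      obtain ⟨hj3, _⟩ := hIAmem j hj1
      rcases Nat.lt_or_ge j cut with h | h
      · have := hdn _ hj3 h
        rw [hj] at this
        exact lt_irrefl y this
      · have := hup _ hj3 h
        rw [hj] at this
        exact lt_irrefl y this
    · rw [hA, Finset.filter_image, Finset.card_image_of_injOn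
        ((hxeinj IA (fun j hj => (hIAmem j hj).1)).mono (by exact_mod_cast Finset.filter_subset _ _))]
      rw [hIA, Finset.filter_filter]
      congr 1
      ext j
      simp only [Finset.mem_filter, Finset.mem_range, Finset.mem_erase, Finset.mem_Ico]
      constructor
      · rintro ⟨hj, hjm, hyj⟩
        refine ⟨hjm, ?_, hj⟩
        by_contra hcc
        exact absurd hyj (not_lt.2 (hdn j hj (by omega)).le)
      · rintro ⟨hjm, hcut, hj⟩
        exact ⟨hj, hjm, hup j hj hcut⟩
  have hNB : ∀ (y : ℝ) (cut : ℕ),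
      (∀ k, k + 1 < n₀ → k + 1 ≠ m → k < cut → ξ k < y) →
      (∀ k, k + 1 < n₀ → k + 1 ≠ m → cut ≤ k → y < ξ k) →
      y ∉ B ∧ (B.filter (fun z => y < z)).card = ((Finset.Ico cut (n₀-1)).erase (m-1)).card := by
    intro y cut hdn hup
    constructor
    · intro hyB
      rw [hB, Finset.mem_image] at hyB
      obtain ⟨k, hk1, hk2⟩ := hyB
      obtain ⟨h1, h2⟩ := hIBmem k hk1
      rcases Nat.lt_or_ge k cut with h | h
      · have := hdn k h1 h2 h
        rw [hk2] at this
        exact lt_irrefl y this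
      · have := hup k h1 h2 h
        rw [hk2] at this
        exact lt_irrefl y this
    · rw [hB, Finset.filter_image, Finset.card_image_of_injOn
        (hξinj.mono (by exact_mod_cast Finset.filter_subset _ _))]
      rw [hIB, Finset.filter_filter]
      congr 1
      ext k
      simp only [Finset.mem_filter, Finset.mem_range, Finset.mem_erase, Finset.mem_Ico]
      constructor
      · rintro ⟨hk, hkm, hyk⟩
        refine ⟨by omega, ?_, hk⟩
        by_contra hcc
        exact absurd hyk (not_lt.2 (hdn k (by omega) hkm (by omega)).le)
      · rintro ⟨hkm, hcut, hk⟩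
        exact ⟨hk, by omega, hup k (by omega) (by omega) hcut⟩
  have hNsplit : ∀ y : ℝ, N y = (A.filter (fun z => y < z)).card + (B.filter (fun z => y < z)).card := by
    intro y
    show ((A ∪ B).filter (fun z => y < z)).card = _
    rw [Finset.filter_union, Finset.card_union_of_disjoint
      (Finset.disjoint_filter_filter hABdisj)]
  have hcard_erase : ∀ a b t : ℕ, ((Finset.Ico a b).erase t).card
      = if a ≤ t ∧ t < b then b - a - 1 else b - a := by
    intro a b t
    by_cases h : a ≤ t ∧ t < b
    · rw [if_pos h, Finset.card_erase_of_mem (Finset.mem_Ico.2 h), Nat.card_Ico]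
    · rw [if_neg h, Finset.erase_eq_of_notMem (fun hcc => h (Finset.mem_Ico.1 hcc)), Nat.card_Ico]
  -- membership/parity on the anchor interval (xe (m-1), xe m)
  have hmem4 : ∀ y : ℝ, xe (m-1) < y → y < xe m → y ∉ T ∧ Even (N y) := by
    intro y h1 h2
    have hdnA : ∀ j, j < n₀ → j < m → xe j < y :=
      fun j hj hjm => lt_of_le_of_lt (hle j (m-1) hj (by omega) (by omega)) h1
    have hupA : ∀ j, j < n₀ → m ≤ j → y < xe j :=
      fun j hj hjm => lt_of_lt_of_le h2 (hle m j hm hj hjm)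
    have hdnB : ∀ k, k + 1 < n₀ → k + 1 ≠ m → k < m - 1 → ξ k < y := by
      intro k hk1 hk2 hkm
      have hbb := (hξ k hk1 hk2).1.2
      exact lt_of_lt_of_le hbb (le_of_lt (lt_of_le_of_lt (hle (k+1) (m-1) hk1 (by omega) (by omega)) h1))
    have hupB : ∀ k, k + 1 < n₀ → k + 1 ≠ m → m - 1 ≤ k → y < ξ k := by
      intro k hk1 hk2 hkm
      have hbb := (hξ k hk1 hk2).1.1
      have hmk : m ≤ k := by omega
      exact lt_trans (hupA k (by omega) hmk) hbb
    obtain ⟨hyA, hcA⟩ := hNA y m hdnA hupA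
    obtain ⟨hyB, hcB⟩ := hNB y (m-1) hdnB hupB
    refine ⟨?_, ?_⟩
    · intro hyT
      rcases Finset.mem_union.1 hyT with h | h
      exacts [hyA h, hyB h]
    · rw [hNsplit y, hcA, hcB, hcard_erase, hcard_erase,
        if_pos (by omega), if_pos (by omega)]
      exact ⟨n₀ - m - 1, by omega⟩
  -- the anchor : leading coefficient is positive
  have hc : 0 < c := by
    have hmm : xe (m-1) < xe m := hlt (m-1) m (by omega) hm (by omega)
    obtain ⟨z₀, hz₀I, hz₀v⟩ := mvt_poly P hmm
    have hz₀pos : 0 < P.derivative.eval z₀ := by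
      rw [hz₀v, hv1 m hm (le_refl m), hv0 (m-1) (by omega) (by omega)]
      have : xe (m-1) < xe m := hmm
      rw [show (1 : ℝ) - 0 = 1 by norm_num]
      exact div_pos one_pos (by linarith)
    obtain ⟨hzT, hzEv⟩ := hmem4 z₀ hz₀I.1 hz₀I.2
    have := (hsgn z₀ hzT).2
    rw [Even.neg_one_pow hzEv, one_mul] at this
    exact this hz₀pos
  have hpos : ∀ y, y ∉ T → Even (N y) → 0 < P.derivative.eval y := by
    intro y hyT hEv
    have h := (hsgn y hyT).1 hc
    rwa [Even.neg_one_pow hEv, one_mul] at h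
  have hneg : ∀ y, y ∉ T → Odd (N y) → P.derivative.eval y < 0 := by
    intro y hyT hOd
    have h := (hsgn y hyT).1 hc
    rw [Odd.neg_one_pow hOd] at h
    linarith
  -- sign of P' on each interval
  have hnotT : ∀ y : ℝ, y ∉ A → y ∉ B → y ∉ T := by
    intro y hyA hyB hyT
    rcases Finset.mem_union.1 hyT with h | h
    exacts [hyA h, hyB h]
  -- S1 : m ≤ k, on (xe k, ξ k), P' > 0
  have hS1 : ∀ k, m ≤ k → k + 1 < n₀ → ∀ y, xe k < y → y < ξ k → 0 < P.derivative.eval y := by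
    intro k hmk hk1 y hy1 hy2
    have hξk := (hξ k hk1 (by omega)).1
    have hdnA : ∀ j, j < n₀ → j < k + 1 → xe j < y :=
      fun j hj hjk => lt_of_le_of_lt (hle j k hj (by omega) (by omega)) hy1
    have hupA : ∀ j, j < n₀ → k + 1 ≤ j → y < xe j :=
      fun j hj hjk => lt_of_lt_of_le (lt_trans hy2 hξk.2) (hle (k+1) j hk1 hj hjk)
    have hdnB : ∀ kk, kk + 1 < n₀ → kk + 1 ≠ m → kk < k → ξ kk < y := by
      intro kk h1 h2 hkk
      have hb := (hξ kk h1 h2).1.2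
      exact lt_of_le_of_lt (le_trans hb.le (hle (kk+1) k h1 (by omega) (by omega))) hy1
    have hupB : ∀ kk, kk + 1 < n₀ → kk + 1 ≠ m → k ≤ kk → y < ξ kk := by
      intro kk h1 h2 hkk
      rcases eq_or_lt_of_le hkk with rfl | h
      · exact hy2
      · exact lt_trans (hupA kk (by omega) (by omega)) (hξ kk h1 h2).1.1
    obtain ⟨hyA, hcA⟩ := hNA y (k+1) hdnA hupA
    obtain ⟨hyB, hcB⟩ := hNB y k hdnB hupB
    refine hpos y (hnotT y hyA hyB) ?_
    rw [hNsplit y, hcA, hcB, hcard_erase, hcard_erase, if_neg (by omega), if_neg (by omega)]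
    exact ⟨n₀ - 1 - k, by omega⟩
  -- S2 : m ≤ k, on (ξ k, xe (k+1)), P' < 0
  have hS2 : ∀ k, m ≤ k → k + 1 < n₀ → ∀ y, ξ k < y → y < xe (k+1) → P.derivative.eval y < 0 := by
    intro k hmk hk1 y hy1 hy2
    have hξk := (hξ k hk1 (by omega)).1
    have hdnA : ∀ j, j < n₀ → j < k + 1 → xe j < y :=
      fun j hj hjk => lt_of_le_of_lt (hle j k hj (by omega) (by omega)) (lt_trans hξk.1 hy1)
    have hupA : ∀ j, j < n₀ → k + 1 ≤ j → y < xe j :=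
      fun j hj hjk => lt_of_lt_of_le hy2 (hle (k+1) j hk1 hj hjk)
    have hdnB : ∀ kk, kk + 1 < n₀ → kk + 1 ≠ m → kk < k + 1 → ξ kk < y := by
      intro kk h1 h2 hkk
      rcases Nat.lt_or_ge kk k with h | h
      · have hb := (hξ kk h1 h2).1.2
        exact lt_of_le_of_lt (le_trans hb.le (hle (kk+1) k h1 (by omega) (by omega)))
          (lt_trans hξk.1 hy1)
      · have : kk = k := by omega
        rw [this]; exact hy1
    have hupB : ∀ kk, kk + 1 < n₀ → kk + 1 ≠ m → k + 1 ≤ kk → y < ξ kk := by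
      intro kk h1 h2 hkk
      exact lt_trans (hupA kk (by omega) (by omega)) (hξ kk h1 h2).1.1
    obtain ⟨hyA, hcA⟩ := hNA y (k+1) hdnA hupA
    obtain ⟨hyB, hcB⟩ := hNB y (k+1) hdnB hupB
    refine hneg y (hnotT y hyA hyB) ?_
    rw [hNsplit y, hcA, hcB, hcard_erase, hcard_erase, if_neg (by omega), if_neg (by omega)]
    exact ⟨n₀ - 2 - k, by omega⟩
  -- S3 : on (xe (n₀-1), ∞), P' > 0
  have hS3 : ∀ y, xe (n₀-1) < y → 0 < P.derivative.eval y := by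
    intro y hy
    have hdnA : ∀ j, j < n₀ → j < n₀ → xe j < y :=
      fun j hj _ => lt_of_le_of_lt (hle j (n₀-1) hj (by omega) (by omega)) hy
    have hupA : ∀ j, j < n₀ → n₀ ≤ j → y < xe j := fun j hj hjk => by omega
    have hdnB : ∀ kk, kk + 1 < n₀ → kk + 1 ≠ m → kk < n₀ - 1 → ξ kk < y := by
      intro kk h1 h2 hkk
      have hb := (hξ kk h1 h2).1.2
      exact lt_of_le_of_lt (le_trans hb.le (hle (kk+1) (n₀-1) h1 (by omega) (by omega))) hy
    have hupB : ∀ kk, kk + 1 < n₀ → kk + 1 ≠ m → n₀ - 1 ≤ kk → y < ξ kk :=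
      fun kk h1 _ hkk => by omega
    obtain ⟨hyA, hcA⟩ := hNA y n₀ hdnA hupA
    obtain ⟨hyB, hcB⟩ := hNB y (n₀-1) hdnB hupB
    refine hpos y (hnotT y hyA hyB) ?_
    rw [hNsplit y, hcA, hcB, hcard_erase, hcard_erase, if_neg (by omega), if_neg (by omega)]
    exact ⟨0, by omega⟩
  -- S4 : on (xe (m-1), xe m), P' > 0
  have hS4 : ∀ y, xe (m-1) < y → y < xe m → 0 < P.derivative.eval y := by
    intro y h1 h2
    obtain ⟨hyT, hEv⟩ := hmem4 y h1 h2
    exact hpos y hyT hEv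
  -- S5 : k + 1 < m, on (xe k, ξ k), P' > 0
  have hS5 : ∀ k, k + 1 < m → ∀ y, xe k < y → y < ξ k → 0 < P.derivative.eval y := by
    intro k hkm y hy1 hy2
    have hk1 : k + 1 < n₀ := by omega
    have hξk := (hξ k hk1 (by omega)).1
    have hdnA : ∀ j, j < n₀ → j < k + 1 → xe j < y :=
      fun j hj hjk => lt_of_le_of_lt (hle j k hj (by omega) (by omega)) hy1
    have hupA : ∀ j, j < n₀ → k + 1 ≤ j → y < xe j :=
      fun j hj hjk => lt_of_lt_of_le (lt_trans hy2 hξk.2) (hle (k+1) j hk1 hj hjk)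
    have hdnB : ∀ kk, kk + 1 < n₀ → kk + 1 ≠ m → kk < k → ξ kk < y := by
      intro kk h1 h2 hkk
      have hb := (hξ kk h1 h2).1.2
      exact lt_of_le_of_lt (le_trans hb.le (hle (kk+1) k h1 (by omega) (by omega))) hy1
    have hupB : ∀ kk, kk + 1 < n₀ → kk + 1 ≠ m → k ≤ kk → y < ξ kk := by
      intro kk h1 h2 hkk
      rcases eq_or_lt_of_le hkk with rfl | h
      · exact hy2
      · exact lt_trans (hupA kk (by omega) (by omega)) (hξ kk h1 h2).1.1
    obtain ⟨hyA, hcA⟩ := hNA y (k+1) hdnA hupA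
    obtain ⟨hyB, hcB⟩ := hNB y k hdnB hupB
    refine hpos y (hnotT y hyA hyB) ?_
    rw [hNsplit y, hcA, hcB, hcard_erase, hcard_erase, if_pos (by omega), if_pos (by omega)]
    exact ⟨n₀ - 2 - k, by omega⟩
  -- S6 : k + 1 < m, on (ξ k, xe (k+1)), P' < 0
  have hS6 : ∀ k, k + 1 < m → ∀ y, ξ k < y → y < xe (k+1) → P.derivative.eval y < 0 := by
    intro k hkm y hy1 hy2
    have hk1 : k + 1 < n₀ := by omega
    have hξk := (hξ k hk1 (by omega)).1
    have hdnA : ∀ j, j < n₀ → j < k + 1 → xe j < y :=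
      fun j hj hjk => lt_of_le_of_lt (hle j k hj (by omega) (by omega)) (lt_trans hξk.1 hy1)
    have hupA : ∀ j, j < n₀ → k + 1 ≤ j → y < xe j :=
      fun j hj hjk => lt_of_lt_of_le hy2 (hle (k+1) j hk1 hj hjk)
    have hdnB : ∀ kk, kk + 1 < n₀ → kk + 1 ≠ m → kk < k + 1 → ξ kk < y := by
      intro kk h1 h2 hkk
      rcases Nat.lt_or_ge kk k with h | h
      · have hb := (hξ kk h1 h2).1.2
        exact lt_of_le_of_lt (le_trans hb.le (hle (kk+1) k h1 (by omega) (by omega)))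
          (lt_trans hξk.1 hy1)
      · have : kk = k := by omega
        rw [this]; exact hy1
    have hupB : ∀ kk, kk + 1 < n₀ → kk + 1 ≠ m → k + 1 ≤ kk → y < ξ kk := by
      intro kk h1 h2 hkk
      exact lt_trans (hupA kk (by omega) (by omega)) (hξ kk h1 h2).1.1
    obtain ⟨hyA, hcA⟩ := hNA y (k+1) hdnA hupA
    obtain ⟨hyB, hcB⟩ := hNB y (k+1) hdnB hupB
    refine hneg y (hnotT y hyA hyB) ?_
    rw [hNsplit y, hcA, hcB, hcard_erase, hcard_erase, if_pos (by omega), if_pos (by omega)]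
    exact ⟨n₀ - 3 - k, by omega⟩
  -- S7 : on (-∞, xe 0), P' < 0
  have hS7 : ∀ y, y < xe 0 → P.derivative.eval y < 0 := by
    intro y hy
    have hdnA : ∀ j, j < n₀ → j < 0 → xe j < y := fun j hj hjk => by omega
    have hupA : ∀ j, j < n₀ → 0 ≤ j → y < xe j :=
      fun j hj _ => lt_of_lt_of_le hy (hle 0 j (by omega) hj (by omega))
    have hdnB : ∀ kk, kk + 1 < n₀ → kk + 1 ≠ m → kk < 0 → ξ kk < y :=
      fun kk h1 _ hkk => by omega
    have hupB : ∀ kk, kk + 1 < n₀ → kk + 1 ≠ m → 0 ≤ kk → y < ξ kk := by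
      intro kk h1 h2 hkk
      exact lt_trans (hupA kk (by omega) (by omega)) (hξ kk h1 h2).1.1
    obtain ⟨hyA, hcA⟩ := hNA y 0 hdnA hupA
    obtain ⟨hyB, hcB⟩ := hNB y 0 hdnB hupB
    refine hneg y (hnotT y hyA hyB) ?_
    rw [hNsplit y, hcA, hcB, hcard_erase, hcard_erase, if_pos (by omega), if_pos (by omega)]
    exact ⟨n₀ - 2, by omega⟩
  constructor
  · -- right side : 1 ≤ P on [xe m, ∞)
    intro y hy
    set ks : Finset ℕ := (Finset.range n₀).filter (fun j => xe j ≤ y) with hks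
    have hmks : m ∈ ks := by
      rw [hks, Finset.mem_filter, Finset.mem_range]; exact ⟨hm, hy⟩
    have hne : ks.Nonempty := ⟨m, hmks⟩
    set k := ks.max' hne with hkd
    have hkmem := ks.max'_mem hne
    obtain ⟨hkna, hky⟩ := Finset.mem_filter.1 hkmem
    have hkn : k < n₀ := Finset.mem_range.1 hkna
    have hmk : m ≤ k := Finset.le_max' _ m hmks
    by_cases hklast : k = n₀ - 1
    · have h1 : P.eval (xe (n₀-1)) ≤ P.eval y :=
        le_of_deriv_pos P (fun t ht => hS3 t ht.1) (hklast ▸ hky)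
      rwa [hv1 (n₀-1) (by omega) (by omega)] at h1
    · have hk1 : k + 1 < n₀ := by omega
      have hyk1 : y < xe (k+1) := by
        by_contra hcc
        have hmem : k + 1 ∈ ks := by
          rw [hks, Finset.mem_filter, Finset.mem_range]
          exact ⟨hk1, not_lt.1 hcc⟩
        have := Finset.le_max' ks (k+1) hmem
        omega
      rcases le_or_gt y (ξ k) with hcase | hcase
      · have h1 : P.eval (xe k) ≤ P.eval y :=
          le_of_deriv_pos P (fun t ht => hS1 k hmk hk1 t ht.1 (lt_of_lt_of_le ht.2 hcase)) hky
        rwa [hv1 k hkn hmk] at h1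
      · have h1 : P.eval (xe (k+1)) ≤ P.eval y :=
          le_of_deriv_neg P (fun t ht => hS2 k hmk hk1 t (lt_trans hcase ht.1) ht.2) hyk1.le
        rwa [hv1 (k+1) hk1 (by omega)] at h1
  · -- left side : 0 ≤ P on (-∞, xe m)
    intro y hy
    rcases lt_or_ge y (xe 0) with h0 | h0
    · have h1 : P.eval (xe 0) ≤ P.eval y :=
        le_of_deriv_neg P (fun t ht => hS7 t ht.2) h0.le
      rwa [hv0 0 (by omega) (by omega)] at h1
    · set ks : Finset ℕ := (Finset.range n₀).filter (fun j => xe j ≤ y) with hks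
      have h0ks : 0 ∈ ks := by
        rw [hks, Finset.mem_filter, Finset.mem_range]; exact ⟨by omega, h0⟩
      have hne : ks.Nonempty := ⟨0, h0ks⟩
      set k := ks.max' hne with hkd
      have hkmem := ks.max'_mem hne
      obtain ⟨hkna, hky⟩ := Finset.mem_filter.1 hkmem
      have hkn : k < n₀ := Finset.mem_range.1 hkna
      have hkm : k < m := by
        by_contra hcc
        have := hle m k hm hkn (by omega)
        linarith
      have hk1 : k + 1 < n₀ := by omega
      have hyk1 : y < xe (k+1) := by
        by_contra hcc
        have hmem : k + 1 ∈ ks := by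
          rw [hks, Finset.mem_filter, Finset.mem_range]
          exact ⟨hk1, not_lt.1 hcc⟩
        have := Finset.le_max' ks (k+1) hmem
        omega
      by_cases hkm1 : k = m - 1
      · have h1 : P.eval (xe (m-1)) ≤ P.eval y :=
          le_of_deriv_pos P (fun t ht => hS4 t ht.1 (lt_trans ht.2 hy)) (hkm1 ▸ hky)
        rwa [hv0 (m-1) (by omega) (by omega)] at h1
      · have hk1m : k + 1 < m := by omega
        rcases le_or_gt y (ξ k) with hcase | hcase
        · have h1 : P.eval (xe k) ≤ P.eval y :=
            le_of_deriv_pos P (fun t ht => hS5 k hk1m t ht.1 (lt_of_lt_of_le ht.2 hcase)) hky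
          rwa [hv0 k hkn (by omega)] at h1
        · have h1 : P.eval (xe (k+1)) ≤ P.eval y :=
            le_of_deriv_neg P (fun t ht => hS6 k hk1m t (lt_trans hcase ht.1) ht.2) hyk1.le
          rwa [hv0 (k+1) hk1 hk1m] at h1

open MeasureTheory Polynomial

/-- **Chebyshev–Markov–Stieltjes majorant.** Let `σ` be a probability measure on `ℝ`
with finite moments, `(S n)` orthogonal polynomials for `σ` with `deg S n = n`, and
`x 0 < ⋯ < x (n₀-1)` the zeros of `S n₀`. If `P` is the Hermite interpolation
polynomial of degree ≤ 2n₀-2 with `P(x k) = 0` for `k < k₀`, `P(x k) = 1` for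
`k ≥ k₀`, and `P'(x k) = 0` for `k ≠ k₀`, then `P(y) ≥ 1` for `y ≥ x k₀` and
`P(y) ≥ 0` for `y < x k₀`; in particular `P ≥ 𝟙_{[x k₀, ∞)}` pointwise. -/
theorem cms_majorant
    (σ : Measure ℝ) [IsProbabilityMeasure σ]
    (hmom : ∀ k : ℕ, Integrable (fun t => t ^ k) σ)
    (S : ℕ → Polynomial ℝ)
    (hdeg : ∀ n, (S n).degree = n)
    (horth : ∀ m n : ℕ, m ≠ n → ∫ t, (S m).eval t * (S n).eval t ∂σ = 0)
    (n₀ : ℕ) (hn₀ : 1 ≤ n₀)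
    (x : Fin n₀ → ℝ) (hx : StrictMono x)
    (hroot : ∀ k, (S n₀).eval (x k) = 0)
    (k₀ : Fin n₀)
    (P : Polynomial ℝ)
    (hPdeg : P.degree ≤ (2 * n₀ - 2 : ℕ))
    (hPval : ∀ k, P.eval (x k) = if k₀ ≤ k then 1 else 0)
    (hPder : ∀ k, k ≠ k₀ → (Polynomial.derivative P).eval (x k) = 0) :
    (∀ y : ℝ, x k₀ ≤ y → 1 ≤ P.eval y) ∧
    (∀ y : ℝ, y < x k₀ → 0 ≤ P.eval y) ∧
    (∀ y : ℝ, Set.indicator (Set.Ici (x k₀)) (fun _ => (1 : ℝ)) y ≤ P.eval y) := by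
  obtain ⟨h1, h2⟩ := cms_key n₀ x hx k₀ P hPdeg hPval hPder
  refine ⟨h1, h2, ?_⟩
  intro y
  by_cases hy : y ∈ Set.Ici (x k₀)
  · rw [Set.indicator_of_mem hy]
    exact h1 y hy
  · rw [Set.indicator_of_notMem hy]
    exact h2 y (by simpa [Set.mem_Ici, not_le] using hy)
end

section
/- With the same notation, let Q be the unique polynomial of degree ≤ 2n₀-2 satisfying Q(x_k) = 0 for k ≤ k₀, Q(x_k) = 1 for k > k₀, and Q'(x_k) = 0 for all k ≠ k₀. Then Q(x) ≤ 0 for x ≤ x_{k₀} and Q(x) ≤ 1 for x > x_{k₀}; in particular Q ≤ 𝟙_{(x_{k₀},∞)} on ℝ. -/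
open MeasureTheory Polynomial

private lemma cms_sq_dvd (p : Polynomial ℝ) (a : ℝ) (h0 : p.eval a = 0)
    (h1 : (derivative p).eval a = 0) : (X - C a) ^ 2 ∣ p := by
  obtain ⟨g, hg⟩ := dvd_iff_isRoot.2 h0
  have hg' : g.eval a = 0 := by
    have h2 := h1
    rw [hg] at h2
    simp [derivative_mul, eval_add, eval_mul] at h2
    exact h2
  obtain ⟨h, hh⟩ := dvd_iff_isRoot.2 hg'
  exact ⟨h, by rw [hg, hh]; ring⟩

private lemma cms_pow_dvd_deriv (p : Polynomial ℝ) (a : ℝ) (k : ℕ)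
    (h : (X - C a) ^ (k + 1) ∣ p) : (X - C a) ^ k ∣ derivative p := by
  obtain ⟨g, hg⟩ := h
  rw [hg, derivative_mul, derivative_pow]
  refine dvd_add ⟨C ((k+1 : ℕ) : ℝ) * derivative (X - C a) * g, ?_⟩
    ⟨(X - C a) * derivative g, ?_⟩
  · simp only [Nat.add_sub_cancel]; ring
  · ring

private lemma cms_pos_of_ne_zero {f : ℝ → ℝ} (hf : Continuous f) {s : Set ℝ}
    (hconv : Convex ℝ s) (hz : ∀ t ∈ s, f t ≠ 0) {a b : ℝ} (ha : a ∈ s) (hb : b ∈ s)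
    (hfa : 0 < f a) : 0 < f b := by
  rcases (hz b hb).lt_or_gt with h | h
  · exfalso
    have hsub : Set.uIcc a b ⊆ s := (hconv.ordConnected).uIcc_subset ha hb
    have h0 : (0:ℝ) ∈ Set.uIcc (f a) (f b) := Set.mem_uIcc.2 (Or.inr ⟨h.le, hfa.le⟩)
    obtain ⟨t, ht, hft⟩ := intermediate_value_uIcc hf.continuousOn h0
    exact hz t (hsub ht) hft
  · exact h

set_option maxHeartbeats 1000000 in
/-- **Chebyshev–Markov–Stieltjes minorant.** With `x 0 < ⋯ < x (n₀-1)` the zeros of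
the orthogonal polynomial `S n₀`, if `Q` is the Hermite interpolation polynomial of
degree ≤ 2n₀-2 with `Q(x k) = 0` for `k ≤ k₀`, `Q(x k) = 1` for `k > k₀` and
`Q'(x k) = 0` for `k ≠ k₀`, then `Q(y) ≤ 0` for `y ≤ x k₀` and `Q(y) ≤ 1` for
`y > x k₀`; in particular `Q ≤ 𝟙_{(x k₀, ∞)}` pointwise. -/
theorem cms_minorant
    (σ : Measure ℝ) [IsProbabilityMeasure σ]
    (hmom : ∀ k : ℕ, Integrable (fun t => t ^ k) σ)
    (S : ℕ → Polynomial ℝ)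
    (hdeg : ∀ n, (S n).degree = n)
    (horth : ∀ m n : ℕ, m ≠ n → ∫ t, (S m).eval t * (S n).eval t ∂σ = 0)
    (n₀ : ℕ) (hn₀ : 1 ≤ n₀)
    (x : Fin n₀ → ℝ) (hx : StrictMono x)
    (hroot : ∀ k, (S n₀).eval (x k) = 0)
    (k₀ : Fin n₀)
    (Q : Polynomial ℝ)
    (hQdeg : Q.degree ≤ (2 * n₀ - 2 : ℕ))
    (hQval : ∀ k, Q.eval (x k) = if k₀ < k then 1 else 0)
    (hQder : ∀ k, k ≠ k₀ → (Polynomial.derivative Q).eval (x k) = 0) :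
    (∀ y : ℝ, y ≤ x k₀ → Q.eval y ≤ 0) ∧
    (∀ y : ℝ, x k₀ < y → Q.eval y ≤ 1) ∧
    (∀ y : ℝ, Q.eval y ≤ Set.indicator (Set.Ioi (x k₀)) (fun _ => (1 : ℝ)) y) := by
  classical
  -- node function on ℕ
  set z : ℕ → ℝ := fun i => if h : i < n₀ then x ⟨i, h⟩ else 0 with hzdef
  have hz : ∀ (i : ℕ) (h : i < n₀), z i = x ⟨i, h⟩ := fun i h => dif_pos h
  set m : ℕ := (k₀ : ℕ) with hmdef
  have hm : m < n₀ := k₀.isLt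
  have hzlt : ∀ {i j : ℕ}, i < j → j < n₀ → z i < z j := by
    intro i j hij hj
    rw [hz i (lt_trans hij hj), hz j hj]
    exact hx (by exact Fin.mk_lt_mk.2 hij)
  have hzle : ∀ {i j : ℕ}, i ≤ j → j < n₀ → z i ≤ z j := by
    intro i j hij hj
    rcases eq_or_lt_of_le hij with rfl | h
    · exact le_rfl
    · exact (hzlt h hj).le
  have hc : z m = x k₀ := by rw [hz m hm]
  have hv : ∀ (i : ℕ) (h : i < n₀), Q.eval (z i) = if m < i then 1 else 0 := by
    intro i h
    rw [hz i h, hQval ⟨i, h⟩]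
    simp [Fin.lt_def, hmdef]
  have hv0 : ∀ i : ℕ, i ≤ m → Q.eval (z i) = 0 := by
    intro i h
    rw [hv i (by omega), if_neg (by omega)]
  have hv1 : ∀ i : ℕ, m < i → i < n₀ → Q.eval (z i) = 1 := by
    intro i h hi
    rw [hv i hi, if_pos h]
  have hd : ∀ (i : ℕ), i < n₀ → i ≠ m → (derivative Q).eval (z i) = 0 := by
    intro i h hne
    rw [hz i h]
    exact hQder ⟨i, h⟩ (by simpa [Fin.ext_iff] using hne)
  have hdegQnat : Q.natDegree ≤ 2 * n₀ - 2 := natDegree_le_iff_degree_le.2 hQdeg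
  have hzne : ∀ {i j : ℕ}, i < j → j < n₀ → z i ≠ z j := fun h hj => ne_of_lt (hzlt h hj)
  have hcop : ∀ a b : ℝ, a ≠ b → IsCoprime (X - C a : Polynomial ℝ) (X - C b) :=
    fun a b hab => isCoprime_X_sub_C_of_isUnit_sub (isUnit_iff_ne_zero.2 (sub_ne_zero.2 hab))
  rcases (by omega : m + 1 = n₀ ∨ m + 1 < n₀) with hlast | hmn
  · -- k₀ is the last index : Q = 0
    have hQ0 : Q = 0 := by
      by_contra hQne
      set u : Polynomial ℝ :=
        ∏ j ∈ Finset.range (m+1), (X - C (z j)) ^ (if j = m then 1 else 2) with hu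
      have hdvd : u ∣ Q := by
        apply Finset.prod_dvd_of_coprime
        · intro i hi j hj hij
          simp only [Set.mem_setOf_eq, Finset.coe_range, Set.mem_Iio] at hi hj
          have hne : z i ≠ z j := by
            rcases lt_or_gt_of_ne hij with h | h
            · exact hzne h (by omega)
            · exact (hzne h (by omega)).symm
          exact ((hcop _ _ hne).pow)
        · intro j hj
          have hj' : j < m + 1 := Finset.mem_range.1 hj
          by_cases hjm : j = m
          · rw [if_pos hjm, pow_one, hjm]
            exact dvd_iff_isRoot.2 (hv0 m le_rfl)
          · rw [if_neg hjm]
            exact cms_sq_dvd Q (z j) (hv0 j (by omega)) (hd j (by omega) hjm)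
      have hdegu : u.natDegree = 2 * m + 1 := by
        rw [hu, natDegree_prod]
        · have : ∀ j ∈ Finset.range (m+1),
              ((X - C (z j)) ^ (if j = m then 1 else 2)).natDegree = if j = m then 1 else 2 := by
            intro j _
            rw [natDegree_pow, natDegree_X_sub_C, mul_one]
          rw [Finset.sum_congr rfl this, Finset.range_add_one,
            Finset.sum_insert Finset.notMem_range_self, if_pos rfl]
          have : ∀ j ∈ Finset.range m, (if j = m then 1 else 2) = 2 := by
            intro j hj
            exact if_neg (by have := Finset.mem_range.1 hj; omega)
          rw [Finset.sum_congr rfl this, Finset.sum_const, Finset.card_range,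
            smul_eq_mul]
          omega
        · intro j _
          exact pow_ne_zero _ (X_sub_C_ne_zero _)
      have := Polynomial.natDegree_le_of_dvd hdvd hQne
      omega
    subst hQ0
    refine ⟨fun y _ => by simp, fun y _ => by simp, fun y => by
      simp only [eval_zero]
      exact Set.indicator_nonneg (fun _ _ => zero_le_one) y⟩
  · -- main case
    have hQ1 : Q.eval (z (m+1)) = 1 := hv1 (m+1) (by omega) hmn
    have hQne : Q ≠ 0 := by
      intro h
      rw [h] at hQ1
      simpa using hQ1
    have hndQ : Q.natDegree ≠ 0 := by
      intro h
      have hC := Polynomial.eq_C_of_natDegree_eq_zero h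
      have h0 := hv0 m le_rfl
      rw [hC] at h0 hQ1
      simp at h0 hQ1
      rw [h0] at hQ1
      exact zero_ne_one hQ1
    have hQd_ne : derivative Q ≠ 0 := by
      intro h
      exact hndQ (Polynomial.natDegree_eq_zero_of_derivative_eq_zero h)
    have hdegQ' : (derivative Q).natDegree ≤ 2 * n₀ - 3 := by
      have := Polynomial.natDegree_derivative_lt hndQ
      omega
    -- counting lemmas
    have hcount : ∀ T : Finset ℝ, (∀ t ∈ T, (derivative Q).eval t = 0) → T.card ≤ 2 * n₀ - 3 := by
      intro T hT
      have hsub : T ⊆ (derivative Q).roots.toFinset := fun t ht =>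
        Multiset.mem_toFinset.2 (mem_roots'.2 ⟨hQd_ne, hT t ht⟩)
      calc T.card ≤ (derivative Q).roots.toFinset.card := Finset.card_le_card hsub
        _ ≤ Multiset.card (derivative Q).roots := (derivative Q).roots.toFinset_card_le
        _ ≤ (derivative Q).natDegree := (derivative Q).card_roots'
        _ ≤ 2 * n₀ - 3 := hdegQ'
    have hcount2 : ∀ T : Finset ℝ, (∀ t ∈ T, (derivative Q).eval t = 0) →
        ∀ a ∈ T, (X - C a) ^ 2 ∣ derivative Q → T.card + 1 ≤ 2 * n₀ - 3 := by
      intro T hT a haT hdvd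
      have hsub : T ⊆ (derivative Q).roots.toFinset := fun t ht =>
        Multiset.mem_toFinset.2 (mem_roots'.2 ⟨hQd_ne, hT t ht⟩)
      have h1 : ∀ t ∈ T, 1 ≤ (derivative Q).roots.count t := fun t ht =>
        Multiset.one_le_count_iff_mem.2 (Multiset.mem_toFinset.1 (hsub ht))
      have h2 : 2 ≤ (derivative Q).roots.count a := by
        rw [count_roots]
        exact (le_rootMultiplicity_iff hQd_ne).2 hdvd
      have e1 : (T.erase a).card ≤ ∑ t ∈ T.erase a, (derivative Q).roots.count t := by
        calc (T.erase a).card = ∑ _t ∈ T.erase a, 1 := by simp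
          _ ≤ _ := Finset.sum_le_sum (fun t ht => h1 t (Finset.mem_of_mem_erase ht))
      have e2 : ∑ t ∈ T, (derivative Q).roots.count t
          ≤ Multiset.card (derivative Q).roots := by
        rw [← Multiset.toFinset_sum_count_eq]
        exact Finset.sum_le_sum_of_subset hsub
      have e3 : Multiset.card (derivative Q).roots ≤ 2 * n₀ - 3 :=
        le_trans ((derivative Q).card_roots') hdegQ'
      have e4 : ∑ t ∈ T, (derivative Q).roots.count t
          = (∑ t ∈ T.erase a, (derivative Q).roots.count t) + (derivative Q).roots.count a :=
        (Finset.sum_erase_add T _ haT).symm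
      have e5 : (T.erase a).card = T.card - 1 := Finset.card_erase_of_mem haT
      have e6 : 1 ≤ T.card := Finset.card_pos.2 ⟨a, haT⟩
      omega
    -- Rolle
    have hro : ∀ a b : ℝ, a < b → Q.eval a = Q.eval b →
        ∃ t, t ∈ Set.Ioo a b ∧ (derivative Q).eval t = 0 := by
      intro a b hab he
      obtain ⟨t, ht, hd0⟩ := exists_deriv_eq_zero (f := fun t => Q.eval t) hab
        Q.continuous.continuousOn he
      refine ⟨t, ht, ?_⟩
      rw [← Polynomial.deriv]
      exact hd0
    -- interior Rolle points
    have hxiE : ∀ j : ℕ, ∃ t : ℝ, j + 1 ≤ m →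
        t ∈ Set.Ioo (z j) (z (j+1)) ∧ (derivative Q).eval t = 0 := by
      intro j
      by_cases h : j + 1 ≤ m
      · obtain ⟨t, ht, hroot⟩ := hro (z j) (z (j+1)) (hzlt (by omega) (by omega))
          (by rw [hv0 j (by omega), hv0 (j+1) h])
        exact ⟨t, fun _ => ⟨ht, hroot⟩⟩
      · exact ⟨0, fun h' => absurd h' h⟩
    choose ξ hξ using hxiE
    have hetaE : ∀ j : ℕ, ∃ t : ℝ, m < j ∧ j + 1 < n₀ →
        t ∈ Set.Ioo (z j) (z (j+1)) ∧ (derivative Q).eval t = 0 := by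
      intro j
      by_cases h : m < j ∧ j + 1 < n₀
      · obtain ⟨t, ht, hroot⟩ := hro (z j) (z (j+1)) (hzlt (by omega) (by omega))
          (by rw [hv1 j h.1 (by omega), hv1 (j+1) (by omega) h.2])
        exact ⟨t, fun _ => ⟨ht, hroot⟩⟩
      · exact ⟨0, fun h' => absurd h' h⟩
    choose η hη using hetaE
    -- base finset of roots of Q'
    set Tn : Finset ℝ := ((Finset.range n₀).erase m).image z with hTndef
    set Tx : Finset ℝ := (Finset.range m).image ξ with hTxdef
    set Th : Finset ℝ := (Finset.Ioo m (n₀ - 1)).image η with hThdef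
    set T₀ : Finset ℝ := Tn ∪ Tx ∪ Th with hT₀def
    have hmemTn : ∀ t ∈ Tn, ∃ i, i < n₀ ∧ i ≠ m ∧ t = z i := by
      intro t ht
      obtain ⟨i, hi, rfl⟩ := Finset.mem_image.1 ht
      have h1 := Finset.mem_of_mem_erase hi
      exact ⟨i, Finset.mem_range.1 h1, Finset.ne_of_mem_erase hi, rfl⟩
    have hmemTx : ∀ t ∈ Tx, ∃ j, j + 1 ≤ m ∧ t = ξ j ∧ t ∈ Set.Ioo (z j) (z (j+1)) := by
      intro t ht
      obtain ⟨j, hj, rfl⟩ := Finset.mem_image.1 ht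
      have h1 : j + 1 ≤ m := Finset.mem_range.1 hj
      exact ⟨j, h1, rfl, (hξ j h1).1⟩
    have hmemTh : ∀ t ∈ Th, ∃ j, m < j ∧ j + 1 < n₀ ∧ t = η j ∧
        t ∈ Set.Ioo (z j) (z (j+1)) := by
      intro t ht
      obtain ⟨j, hj, rfl⟩ := Finset.mem_image.1 ht
      have h1 := Finset.mem_Ioo.1 hj
      have h2 : m < j ∧ j + 1 < n₀ := ⟨h1.1, by omega⟩
      exact ⟨j, h2.1, h2.2, rfl, (hη j h2).1⟩
    have hnode_Ioo : ∀ i, i < n₀ → ∀ j, j + 1 < n₀ → z i ∉ Set.Ioo (z j) (z (j+1)) := by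
      intro i hi j hj hmem
      rcases le_or_gt i j with h | h
      · exact absurd hmem.1 (not_lt.2 (hzle h (by omega)))
      · exact absurd hmem.2 (not_lt.2 (hzle h hi))
    have hT₀root : ∀ t ∈ T₀, (derivative Q).eval t = 0 := by
      intro t ht
      rcases Finset.mem_union.1 ht with ht' | ht'
      · rcases Finset.mem_union.1 ht' with ht'' | ht''
        · obtain ⟨i, hi, hne, rfl⟩ := hmemTn t ht''
          exact hd i hi hne
        · obtain ⟨j, hj, rfl, _⟩ := hmemTx t ht''
          exact (hξ j hj).2
      · obtain ⟨j, hj1, hj2, rfl, _⟩ := hmemTh t ht'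
        exact (hη j ⟨hj1, hj2⟩).2
    have hcardTn : Tn.card = n₀ - 1 := by
      rw [hTndef, Finset.card_image_of_injOn, Finset.card_erase_of_mem
        (Finset.mem_range.2 hm), Finset.card_range]
      intro i hi j hj hij
      simp only [Finset.coe_erase, Set.mem_diff, Finset.coe_range, Set.mem_Iio] at hi hj
      by_contra hne
      rcases lt_or_gt_of_ne hne with h | h
      · exact hzne h hj.1 hij
      · exact hzne h hi.1 hij.symm
    have hcardTx : Tx.card = m := by
      rw [hTxdef, Finset.card_image_of_injOn, Finset.card_range]
      intro i hi j hj hij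
      simp only [Finset.coe_range, Set.mem_Iio] at hi hj
      by_contra hne
      rcases lt_or_gt_of_ne hne with h | h
      · have h1 : ξ i < z (i+1) := (hξ i hi).1.2
        have h2 : z j < ξ j := (hξ j hj).1.1
        have h3 : z (i+1) ≤ z j := hzle h (by omega)
        rw [hij] at h1
        linarith
      · have h1 : ξ j < z (j+1) := (hξ j hj).1.2
        have h2 : z i < ξ i := (hξ i hi).1.1
        have h3 : z (j+1) ≤ z i := hzle h (by omega)
        rw [hij] at h2
        linarith
    have hcardTh : Th.card = n₀ - 1 - m - 1 := by
      rw [hThdef, Finset.card_image_of_injOn, Nat.card_Ioo]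
      intro i hi j hj hij
      simp only [Finset.coe_Ioo, Set.mem_Ioo] at hi hj
      have hIoo : ∀ k, m < k → k < n₀ - 1 → η k ∈ Set.Ioo (z k) (z (k+1)) :=
        fun k h1 h2 => (hη k ⟨h1, by omega⟩).1
      by_contra hne
      rcases lt_or_gt_of_ne hne with h | h
      · have h1 : η i < z (i+1) := (hIoo i hi.1 hi.2).2
        have h2 : z j < η j := (hIoo j hj.1 hj.2).1
        have h3 : z (i+1) ≤ z j := hzle h (by omega)
        rw [hij] at h1
        linarith
      · have h1 : η j < z (j+1) := (hIoo j hj.1 hj.2).2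
        have h2 : z i < η i := (hIoo i hi.1 hi.2).1
        have h3 : z (j+1) ≤ z i := hzle h (by omega)
        rw [hij] at h2
        linarith
    have hTx_lt : ∀ t ∈ Tx, t < z m := by
      intro t ht
      obtain ⟨j, hj, _, hIoo⟩ := hmemTx t ht
      exact lt_of_lt_of_le hIoo.2 (hzle hj hm)
    have hTh_gt : ∀ t ∈ Th, z (m+1) ≤ t := by
      intro t ht
      obtain ⟨j, hj1, hj2, _, hIoo⟩ := hmemTh t ht
      exact le_trans (hzle (by omega) (by omega)) hIoo.1.le
    have hdisj1 : Disjoint Tn Tx := by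
      rw [Finset.disjoint_left]
      intro t ht ht'
      obtain ⟨i, hi, _, hei⟩ := hmemTn t ht
      obtain ⟨j, hj, _, hIoo⟩ := hmemTx t ht'
      rw [hei] at hIoo
      exact hnode_Ioo i hi j (by omega) hIoo
    have hdisj2 : Disjoint (Tn ∪ Tx) Th := by
      rw [Finset.disjoint_left]
      intro t ht ht'
      obtain ⟨j, hj1, hj2, _, hIoo⟩ := hmemTh t ht'
      rcases Finset.mem_union.1 ht with ht'' | ht''
      · obtain ⟨i, hi, _, hei⟩ := hmemTn t ht''
        rw [hei] at hIoo
        exact hnode_Ioo i hi j hj2 hIoo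
      · have h1 := hTx_lt t ht''
        have h2 := hTh_gt t ht'
        have h3 : z m < z (m+1) := hzlt (by omega) hmn
        linarith
    have hcardT₀ : T₀.card = 2 * n₀ - 3 := by
      rw [hT₀def, Finset.card_union_of_disjoint hdisj2, Finset.card_union_of_disjoint hdisj1,
        hcardTn, hcardTx, hcardTh]
      omega
    have hzmm1 : z m < z (m+1) := hzlt (by omega) hmn
    have honly : ∀ (t : ℝ) (j : ℕ), j + 1 < n₀ → t ∈ Set.Ioo (z j) (z (j+1)) → t ∈ T₀ →
        (j + 1 ≤ m ∧ t = ξ j) ∨ (m < j ∧ t = η j) := by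
      intro t j hj hIoo hmem
      have hdisjIoo : ∀ j' : ℕ, j' + 1 < n₀ → t ∈ Set.Ioo (z j') (z (j'+1)) → j' = j := by
        intro j' hj' hIoo'
        by_contra hne
        rcases lt_or_gt_of_ne hne with h | h
        · have h1 : z (j'+1) ≤ z j := hzle (by omega) (by omega)
          have h2 := hIoo'.2
          have h3 := hIoo.1
          linarith
        · have h1 : z (j+1) ≤ z j' := hzle (by omega) (by omega)
          have h2 := hIoo.2
          have h3 := hIoo'.1
          linarith
      rcases Finset.mem_union.1 hmem with ht' | ht'
      · rcases Finset.mem_union.1 ht' with ht'' | ht''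
        · obtain ⟨i, hi, _, hei⟩ := hmemTn t ht''
          rw [hei] at hIoo
          exact absurd hIoo (hnode_Ioo i hi j hj)
        · obtain ⟨j', hj', he, hIoo'⟩ := hmemTx t ht''
          have hejj := hdisjIoo j' (by omega) hIoo'
          subst hejj
          exact Or.inl ⟨hj', he⟩
      · obtain ⟨j', hj1, hj2, he, hIoo'⟩ := hmemTh t ht'
        have hejj := hdisjIoo j' hj2 hIoo'
        subst hejj
        exact Or.inr ⟨hj1, he⟩
    have hC1 : ∀ w : ℝ, z m ≤ w → w < z (m+1) → (derivative Q).eval w = 0 → False := by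
      intro w hw1 hw2 hw
      have hwT : w ∉ T₀ := by
        intro hmem
        rcases Finset.mem_union.1 hmem with ht' | ht'
        · rcases Finset.mem_union.1 ht' with ht'' | ht''
          · obtain ⟨i, hi, hne, hei⟩ := hmemTn w ht''
            rcases lt_or_gt_of_ne (fun h : i = m => hne h) with h | h
            · have hzz : z i < z m := hzlt h hm
              rw [← hei] at hzz
              linarith
            · have hzz : z (m+1) ≤ z i := hzle (by omega) hi
              rw [← hei] at hzz
              linarith
          · have := hTx_lt w ht''
            linarith
        · have := hTh_gt w ht'
          linarith
      have hcard := hcount (insert w T₀) (by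
        intro t ht
        rcases Finset.mem_insert.1 ht with rfl | ht'
        · exact hw
        · exact hT₀root t ht')
      rw [Finset.card_insert_of_notMem hwT, hcardT₀] at hcard
      omega
    have hC3 : ∀ i, i < n₀ → i ≠ m → ¬ ((X - C (z i)) ^ 2 ∣ derivative Q) := by
      intro i hi hne hdvd
      have hmem : z i ∈ T₀ := Finset.mem_union.2 (Or.inl (Finset.mem_union.2 (Or.inl
        (Finset.mem_image.2 ⟨i, Finset.mem_erase.2 ⟨hne, Finset.mem_range.2 hi⟩, rfl⟩))))
      have hcard := hcount2 T₀ hT₀root (z i) hmem hdvd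
      rw [hcardT₀] at hcard
      omega
    have hC2 : ∀ w : ℝ, w < z m → (∀ i, i < n₀ → w ≠ z i) → Q.eval w = 0 → False := by
      intro w hw hnode hw0
      have hloc : ∀ j, j ≤ m → w < z j →
          (w < z 0 ∨ ∃ i, i + 1 ≤ m ∧ z i < w ∧ w < z (i+1)) := by
        intro j
        induction j with
        | zero => exact fun _ h => Or.inl h
        | succ j ih =>
          intro hj h
          rcases lt_trichotomy w (z j) with h' | h' | h'
          · exact ih (by omega) h'
          · exact absurd h' (hnode j (by omega))
          · exact Or.inr ⟨j, hj, h', h⟩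
      rcases hloc m le_rfl hw with hcase | ⟨i, hi, hwi1, hwi2⟩
      · obtain ⟨ρ, hρ, hρr⟩ := hro w (z 0) hcase (by rw [hw0, hv0 0 (by omega)])
        have hρT : ρ ∉ T₀ := by
          intro hmem
          rcases Finset.mem_union.1 hmem with ht' | ht'
          · rcases Finset.mem_union.1 ht' with ht'' | ht''
            · obtain ⟨i', hi', _, hei⟩ := hmemTn ρ ht''
              have hzz : z 0 ≤ z i' := hzle (by omega) hi'
              rw [← hei] at hzz
              have := hρ.2
              linarith
            · obtain ⟨j, hj, he, hIoo⟩ := hmemTx ρ ht''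
              have hzz : z 0 ≤ z j := hzle (by omega) (by omega)
              have h1 := hρ.2
              have h2 := hIoo.1
              linarith
          · obtain ⟨j, hj1, hj2, he, hIoo⟩ := hmemTh ρ ht'
            have hzz : z 0 ≤ z j := hzle (by omega) (by omega)
            have h1 := hρ.2
            have h2 := hIoo.1
            linarith
        have hcard := hcount (insert ρ T₀) (by
          intro t ht
          rcases Finset.mem_insert.1 ht with rfl | ht'
          · exact hρr
          · exact hT₀root t ht')
        rw [Finset.card_insert_of_notMem hρT, hcardT₀] at hcard
        omega
      · obtain ⟨ρ₁, hρ₁, hρ₁r⟩ := hro (z i) w hwi1 (by rw [hw0, hv0 i (by omega)])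
        obtain ⟨ρ₂, hρ₂, hρ₂r⟩ := hro w (z (i+1)) hwi2 (by rw [hw0, hv0 (i+1) hi])
        have hξi : ξ i ∈ T₀ := Finset.mem_union.2 (Or.inl (Finset.mem_union.2 (Or.inr
          (Finset.mem_image.2 ⟨i, Finset.mem_range.2 (by omega), rfl⟩))))
        have hρ₁Ioo : ρ₁ ∈ Set.Ioo (z i) (z (i+1)) := ⟨hρ₁.1, lt_trans hρ₁.2 hwi2⟩
        have hρ₂Ioo : ρ₂ ∈ Set.Ioo (z i) (z (i+1)) := ⟨lt_trans hwi1 hρ₂.1, hρ₂.2⟩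
        have key : ∀ ρ ∈ Set.Ioo (z i) (z (i+1)), ρ ∈ T₀ → ρ = ξ i := by
          intro ρ hIoo hmem
          rcases honly ρ i (by omega) hIoo hmem with ⟨_, he⟩ | ⟨hmi, _⟩
          · exact he
          · omega
        have h1ne : ρ₁ ∉ T₀.erase (ξ i) := by
          intro hmem
          exact Finset.ne_of_mem_erase hmem (key ρ₁ hρ₁Ioo (Finset.mem_of_mem_erase hmem))
        have h2ne : ρ₂ ∉ insert ρ₁ (T₀.erase (ξ i)) := by
          intro hmem
          rcases Finset.mem_insert.1 hmem with he | hmem'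
          · have h1 := hρ₁.2
            have h2 := hρ₂.1
            rw [he] at h2
            linarith
          · exact Finset.ne_of_mem_erase hmem' (key ρ₂ hρ₂Ioo (Finset.mem_of_mem_erase hmem'))
        have hcard := hcount (insert ρ₂ (insert ρ₁ (T₀.erase (ξ i)))) (by
          intro t ht
          rcases Finset.mem_insert.1 ht with rfl | ht'
          · exact hρ₂r
          · rcases Finset.mem_insert.1 ht' with rfl | ht''
            · exact hρ₁r
            · exact hT₀root t (Finset.mem_of_mem_erase ht''))
        rw [Finset.card_insert_of_notMem h2ne, Finset.card_insert_of_notMem h1ne,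
          Finset.card_erase_of_mem hξi, hcardT₀] at hcard
        omega
    have hC4 : ∀ w : ℝ, z m < w → (∀ i, i < n₀ → w ≠ z i) → Q.eval w = 1 → False := by
      intro w hw hnode hw1
      rcases lt_trichotomy w (z (n₀ - 1)) with hlt | heq | hgt
      · have hloc : ∀ j, m + 1 ≤ j → j < n₀ → w < z j →
            (w < z (m+1) ∨ ∃ i, m < i ∧ i + 1 < n₀ ∧ z i < w ∧ w < z (i+1)) := by
          intro j
          induction j with
          | zero => exact fun h => absurd h (by omega)
          | succ j ih =>
            intro hj1 hj2 hj3
            rcases (by omega : m + 1 = j + 1 ∨ m + 1 ≤ j) with he | hle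
            · exact Or.inl (by rw [he]; exact hj3)
            · rcases lt_trichotomy w (z j) with h' | h' | h'
              · exact ih hle (by omega) h'
              · exact absurd h' (hnode j (by omega))
              · exact Or.inr ⟨j, by omega, by omega, h', hj3⟩
        rcases hloc (n₀ - 1) (by omega) (by omega) (by
            have : n₀ - 1 = n₀ - 1 := rfl
            exact hlt) with hcase | ⟨i, hi1, hi2, hwi1, hwi2⟩
        · obtain ⟨ρ, hρ, hρr⟩ := hro w (z (m+1)) hcase (by rw [hw1, hv1 (m+1) (by omega) hmn])
          exact hC1 ρ (le_of_lt (lt_trans hw hρ.1)) hρ.2 hρr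
        · obtain ⟨ρ₁, hρ₁, hρ₁r⟩ := hro (z i) w hwi1 (by rw [hw1, hv1 i hi1 (by omega)])
          obtain ⟨ρ₂, hρ₂, hρ₂r⟩ := hro w (z (i+1)) hwi2 (by rw [hw1, hv1 (i+1) (by omega) hi2])
          have hηi : η i ∈ T₀ := Finset.mem_union.2 (Or.inr
            (Finset.mem_image.2 ⟨i, Finset.mem_Ioo.2 ⟨hi1, by omega⟩, rfl⟩))
          have hρ₁Ioo : ρ₁ ∈ Set.Ioo (z i) (z (i+1)) := ⟨hρ₁.1, lt_trans hρ₁.2 hwi2⟩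
          have hρ₂Ioo : ρ₂ ∈ Set.Ioo (z i) (z (i+1)) := ⟨lt_trans hwi1 hρ₂.1, hρ₂.2⟩
          have key : ∀ ρ ∈ Set.Ioo (z i) (z (i+1)), ρ ∈ T₀ → ρ = η i := by
            intro ρ hIoo hmem
            rcases honly ρ i hi2 hIoo hmem with ⟨him, _⟩ | ⟨_, he⟩
            · omega
            · exact he
          have h1ne : ρ₁ ∉ T₀.erase (η i) := by
            intro hmem
            exact Finset.ne_of_mem_erase hmem (key ρ₁ hρ₁Ioo (Finset.mem_of_mem_erase hmem))
          have h2ne : ρ₂ ∉ insert ρ₁ (T₀.erase (η i)) := by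
            intro hmem
            rcases Finset.mem_insert.1 hmem with he | hmem'
            · have h1 := hρ₁.2
              have h2 := hρ₂.1
              rw [he] at h2
              linarith
            · exact Finset.ne_of_mem_erase hmem' (key ρ₂ hρ₂Ioo (Finset.mem_of_mem_erase hmem'))
          have hcard := hcount (insert ρ₂ (insert ρ₁ (T₀.erase (η i)))) (by
            intro t ht
            rcases Finset.mem_insert.1 ht with rfl | ht'
            · exact hρ₂r
            · rcases Finset.mem_insert.1 ht' with rfl | ht''
              · exact hρ₁r
              · exact hT₀root t (Finset.mem_of_mem_erase ht''))
          rw [Finset.card_insert_of_notMem h2ne, Finset.card_insert_of_notMem h1ne,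
            Finset.card_erase_of_mem hηi, hcardT₀] at hcard
          omega
      · exact hnode (n₀ - 1) (by omega) heq
      · obtain ⟨ρ, hρ, hρr⟩ := hro (z (n₀ - 1)) w hgt
          (by rw [hw1, hv1 (n₀ - 1) (by omega) (by omega)])
        have hρT : ρ ∉ T₀ := by
          intro hmem
          rcases Finset.mem_union.1 hmem with ht' | ht'
          · rcases Finset.mem_union.1 ht' with ht'' | ht''
            · obtain ⟨i', hi', _, hei⟩ := hmemTn ρ ht''
              have hzz : z i' ≤ z (n₀ - 1) := hzle (by omega) (by omega)
              rw [← hei] at hzz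
              have := hρ.1
              linarith
            · obtain ⟨j, hj, he, hIoo⟩ := hmemTx ρ ht''
              have hzz : z (j+1) ≤ z (n₀ - 1) := hzle (by omega) (by omega)
              have h1 := hρ.1
              have h2 := hIoo.2
              linarith
          · obtain ⟨j, hj1, hj2, he, hIoo⟩ := hmemTh ρ ht'
            have hzz : z (j+1) ≤ z (n₀ - 1) := hzle (by omega) (by omega)
            have h1 := hρ.1
            have h2 := hIoo.2
            linarith
        have hcard := hcount (insert ρ T₀) (by
          intro t ht
          rcases Finset.mem_insert.1 ht with rfl | ht'
          · exact hρr
          · exact hT₀root t ht')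
        rw [Finset.card_insert_of_notMem hρT, hcardT₀] at hcard
        omega
    -- derivative is positive on [z m, z (m+1))
    have hIcoNe : ∀ t ∈ Set.Ico (z m) (z (m+1)), (derivative Q).eval t ≠ 0 :=
      fun t ht h => hC1 t ht.1 ht.2 h
    have hQ'c_pos : 0 < (derivative Q).eval (z m) := by
      rcases (hIcoNe (z m) ⟨le_rfl, hzmm1⟩).lt_or_gt with hneg | hpos
      · exfalso
        have hallneg : ∀ t ∈ Set.Ico (z m) (z (m+1)), (derivative Q).eval t < 0 := by
          intro t ht
          have hh := cms_pos_of_ne_zero (f := fun t => -(derivative Q).eval t)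
            ((derivative Q).continuous.neg) (convex_Ico _ _)
            (fun s hs => neg_ne_zero.2 (hIcoNe s hs)) (Set.mem_Ico.2 ⟨le_rfl, hzmm1⟩) ht
            (by simpa using hneg)
          simpa using hh
        have hanti : StrictAntiOn (fun t => Q.eval t) (Set.Icc (z m) (z (m+1))) := by
          apply strictAntiOn_of_deriv_neg (convex_Icc _ _) Q.continuous.continuousOn
          intro t ht
          rw [interior_Icc] at ht
          rw [Polynomial.deriv]
          exact hallneg t ⟨ht.1.le, ht.2⟩
        have hcon := hanti (Set.mem_Icc.2 ⟨le_rfl, hzmm1.le⟩)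
          (Set.mem_Icc.2 ⟨hzmm1.le, le_rfl⟩) hzmm1
        simp only [hv0 m le_rfl, hQ1] at hcon
        linarith
      · exact hpos
    have hQ'pos : ∀ t ∈ Set.Ico (z m) (z (m+1)), 0 < (derivative Q).eval t := by
      intro t ht
      exact cms_pos_of_ne_zero (f := fun t => (derivative Q).eval t)
        (derivative Q).continuous (convex_Ico _ _) hIcoNe
        (Set.mem_Ico.2 ⟨le_rfl, hzmm1⟩) ht hQ'c_pos
    have hmono : StrictMonoOn (fun t => Q.eval t) (Set.Icc (z m) (z (m+1))) := by
      apply strictMonoOn_of_deriv_pos (convex_Icc _ _) Q.continuous.continuousOn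
      intro t ht
      rw [interior_Icc] at ht
      rw [Polynomial.deriv]
      exact hQ'pos t ⟨ht.1.le, ht.2⟩
    -- left factorization  Q = wp * (X - C (z m)) * A
    set wp : Polynomial ℝ := ∏ j ∈ Finset.range m, (X - C (z j)) ^ 2 with hwpdef
    have hwpQ : wp ∣ Q := by
      apply Finset.prod_dvd_of_coprime
      · intro i hi j hj hij
        simp only [Finset.coe_range, Set.mem_Iio] at hi hj
        have hne : z i ≠ z j := by
          rcases lt_or_gt_of_ne hij with h | h
          · exact hzne h (by omega)
          · exact (hzne h (by omega)).symm
        exact (hcop _ _ hne).pow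
      · intro j hj
        have hj' : j < m := Finset.mem_range.1 hj
        exact cms_sq_dvd Q (z j) (hv0 j (by omega)) (hd j (by omega) (by omega))
    have hlinQ : (X - C (z m)) ∣ Q := dvd_iff_isRoot.2 (hv0 m le_rfl)
    have hcop2 : IsCoprime wp (X - C (z m)) := by
      apply IsCoprime.prod_left
      intro j hj
      have hj' : j < m := Finset.mem_range.1 hj
      exact (hcop _ _ (hzne hj' hm)).pow_left
    obtain ⟨A, hA⟩ := hcop2.mul_dvd hwpQ hlinQ
    have hAeval : ∀ y : ℝ, Q.eval y = wp.eval y * (y - z m) * A.eval y := by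
      intro y
      rw [hA]
      simp [eval_mul]
    have hwp_nonneg : ∀ y : ℝ, 0 ≤ wp.eval y := by
      intro y
      rw [hwpdef, eval_prod]
      apply Finset.prod_nonneg
      intro j _
      simp only [eval_pow, eval_sub, eval_X, eval_C]
      exact sq_nonneg _
    have hwp_pos : ∀ y : ℝ, (∀ j, j < m → y ≠ z j) → 0 < wp.eval y := by
      intro y hy
      rw [hwpdef, eval_prod]
      apply Finset.prod_pos
      intro j hj
      simp only [eval_pow, eval_sub, eval_X, eval_C]
      have hne : y - z j ≠ 0 := sub_ne_zero.2 (hy j (Finset.mem_range.1 hj))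
      exact lt_of_le_of_ne (sq_nonneg _) (Ne.symm (pow_ne_zero 2 hne))
    have hA_c : 0 < A.eval (z m) := by
      have hQ'eval : (derivative Q).eval (z m) = wp.eval (z m) * A.eval (z m) := by
        rw [hA]
        simp only [derivative_mul, derivative_sub, derivative_X, derivative_C, eval_add,
          eval_mul, eval_sub, eval_X, eval_C, sub_self, mul_zero, zero_mul, add_zero, sub_zero,
          mul_one, zero_add]
        try ring
      have hwpc : 0 < wp.eval (z m) := hwp_pos (z m) (fun j hj => (hzne hj hm).symm)
      have h := hQ'c_pos
      rw [hQ'eval] at h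
      rcases mul_pos_iff.1 h with ⟨_, h2⟩ | ⟨h1, _⟩
      · exact h2
      · linarith
    have hAne : ∀ t : ℝ, t ≤ z m → A.eval t ≠ 0 := by
      intro t ht hA0
      rcases eq_or_lt_of_le ht with heq | hlt
      · rw [heq] at hA0
        rw [hA0] at hA_c
        exact lt_irrefl 0 hA_c
      · by_cases hnode : ∀ i, i < n₀ → t ≠ z i
        · exact hC2 t hlt hnode (by rw [hAeval t, hA0, mul_zero])
        · push_neg at hnode
          obtain ⟨i, hi, hti⟩ := hnode
          have him : i < m := by
            by_contra hcon
            push_neg at hcon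
            have : z m ≤ z i := hzle hcon hi
            rw [← hti] at this
            linarith
          have h1 : (X - C (z i)) ∣ A := dvd_iff_isRoot.2 (by rw [← hti]; exact hA0)
          have h2 : (X - C (z i)) ^ 2 ∣ wp := by
            rw [hwpdef]
            exact Finset.dvd_prod_of_mem _ (Finset.mem_range.2 him)
          have h3 : (X - C (z i)) ^ (2+1) ∣ Q := by
            obtain ⟨g1, e1⟩ := h2
            obtain ⟨g2, e2⟩ := h1
            rw [hA, e1, e2]
            exact ⟨g1 * (X - C (z m)) * g2, by ring⟩
          exact hC3 i hi (by omega) (cms_pow_dvd_deriv Q (z i) 2 h3)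
    have hApos : ∀ y : ℝ, y ≤ z m → 0 < A.eval y := by
      intro y hy
      exact cms_pos_of_ne_zero A.continuous (convex_Iic (z m))
        (fun t ht => hAne t ht) (Set.mem_Iic.2 le_rfl) (Set.mem_Iic.2 hy) hA_c
    have part1 : ∀ y : ℝ, y ≤ x k₀ → Q.eval y ≤ 0 := by
      intro y hy
      rw [← hc] at hy
      rw [hAeval y]
      have h1 := hwp_nonneg y
      have h2 : y - z m ≤ 0 := by linarith
      have h3 := hApos y hy
      have h4 : 0 ≤ wp.eval y * A.eval y * (z m - y) :=
        mul_nonneg (mul_nonneg h1 h3.le) (by linarith)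
      nlinarith [h4]
    -- right factorization  Q - 1 = vp * B
    set vp : Polynomial ℝ := ∏ j ∈ Finset.Ico (m+1) n₀, (X - C (z j)) ^ 2 with hvpdef
    have hvpQ : vp ∣ Q - C 1 := by
      apply Finset.prod_dvd_of_coprime
      · intro i hi j hj hij
        simp only [Finset.coe_Ico, Set.mem_Ico] at hi hj
        have hne : z i ≠ z j := by
          rcases lt_or_gt_of_ne hij with h | h
          · exact hzne h (by omega)
          · exact (hzne h (by omega)).symm
        exact (hcop _ _ hne).pow
      · intro j hj
        have hj' := Finset.mem_Ico.1 hj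
        apply cms_sq_dvd (Q - C 1) (z j)
        · simp [hv1 j (by omega) (by omega)]
        · simp only [derivative_sub, derivative_C, sub_zero]
          exact hd j (by omega) (by omega)
    obtain ⟨B, hB⟩ := hvpQ
    have hBeval : ∀ y : ℝ, Q.eval y - 1 = vp.eval y * B.eval y := by
      intro y
      have := congrArg (fun p => Polynomial.eval y p) hB
      simpa [eval_mul] using this
    have hvp_nonneg : ∀ y : ℝ, 0 ≤ vp.eval y := by
      intro y
      rw [hvpdef, eval_prod]
      apply Finset.prod_nonneg
      intro j _
      simp only [eval_pow, eval_sub, eval_X, eval_C]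
      exact sq_nonneg _
    have hvp_pos : ∀ y : ℝ, (∀ j, m + 1 ≤ j → j < n₀ → y ≠ z j) → 0 < vp.eval y := by
      intro y hy
      rw [hvpdef, eval_prod]
      apply Finset.prod_pos
      intro j hj
      have hj' := Finset.mem_Ico.1 hj
      simp only [eval_pow, eval_sub, eval_X, eval_C]
      have hne : y - z j ≠ 0 := sub_ne_zero.2 (hy j hj'.1 hj'.2)
      exact lt_of_le_of_ne (sq_nonneg _) (Ne.symm (pow_ne_zero 2 hne))
    set y₀ : ℝ := (z m + z (m+1)) / 2 with hy₀def
    have hy₀ : y₀ ∈ Set.Ioo (z m) (z (m+1)) := by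
      constructor
      · rw [hy₀def]; linarith
      · rw [hy₀def]; linarith
    have hQy₀ : Q.eval y₀ < 1 := by
      have hmm := hmono (Set.mem_Icc.2 ⟨hy₀.1.le, hy₀.2.le⟩)
        (Set.mem_Icc.2 ⟨hzmm1.le, le_rfl⟩) hy₀.2
      simpa only [hQ1] using hmm
    have hB_y₀ : B.eval y₀ < 0 := by
      have h1 := hBeval y₀
      have h2 : 0 < vp.eval y₀ := by
        apply hvp_pos
        intro j hj1 hj2 he
        have : z (m+1) ≤ z j := hzle hj1 hj2
        have := hy₀.2
        rw [he] at this
        linarith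
      nlinarith
    have hBne : ∀ t : ℝ, z m < t → B.eval t ≠ 0 := by
      intro t ht hB0
      have hQt : Q.eval t = 1 := by
        have h1 := hBeval t
        rw [hB0, mul_zero] at h1
        linarith
      by_cases hnode : ∀ i, i < n₀ → t ≠ z i
      · exact hC4 t ht hnode hQt
      · push_neg at hnode
        obtain ⟨i, hi, hti⟩ := hnode
        have him : m < i := by
          by_contra hcon
          push_neg at hcon
          have : z i ≤ z m := hzle hcon hm
          rw [← hti] at this
          linarith
        have h1 : (X - C (z i)) ∣ B := dvd_iff_isRoot.2 (by rw [← hti]; exact hB0)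
        have h2 : (X - C (z i)) ^ 2 ∣ vp := by
          rw [hvpdef]
          exact Finset.dvd_prod_of_mem _ (Finset.mem_Ico.2 ⟨by omega, hi⟩)
        have h3 : (X - C (z i)) ^ (2+1) ∣ Q - C 1 := by
          obtain ⟨g1, e1⟩ := h2
          obtain ⟨g2, e2⟩ := h1
          rw [hB, e1, e2]
          exact ⟨g1 * g2, by ring⟩
        have h4 := cms_pow_dvd_deriv (Q - C 1) (z i) 2 h3
        rw [derivative_sub, derivative_C, sub_zero] at h4
        exact hC3 i hi (by omega) h4
    have hBneg : ∀ y : ℝ, z m < y → B.eval y < 0 := by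
      intro y hy
      have hh := cms_pos_of_ne_zero (f := fun t => -(B.eval t)) (B.continuous.neg)
        (convex_Ioi (z m)) (fun t ht => neg_ne_zero.2 (hBne t ht))
        (Set.mem_Ioi.2 hy₀.1) (Set.mem_Ioi.2 hy)
        (by simpa using hB_y₀)
      simpa using hh
    have part2 : ∀ y : ℝ, x k₀ < y → Q.eval y ≤ 1 := by
      intro y hy
      rw [← hc] at hy
      have h1 := hBeval y
      have h2 := hvp_nonneg y
      have h3 := hBneg y hy
      have h4 : 0 ≤ vp.eval y * (-B.eval y) := mul_nonneg h2 (by linarith)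
      nlinarith [h4]
    refine ⟨part1, part2, ?_⟩
    intro y
    by_cases hy : y ∈ Set.Ioi (x k₀)
    · rw [Set.indicator_of_mem hy]
      exact part2 y hy
    · rw [Set.indicator_of_notMem hy]
      exact part1 y (by simpa using hy)
end

section
/- There is a universal constant C such that for every n₀ ≥ 1 and every zero x₀ = cos θ₀ of T_{n₀} with 0 < θ₀ ≤ π/2, one has ∫_ℝ [T_{n₀}(x)/(T_{n₀}'(x₀)(x - x₀))]² dσ₁(x) ≤ C/n₀. -/
open MeasureTheory Polynomial Real

/-- The arcsine probability measure `dσ₁(x) = (1/π)(1-x²)₊^{-1/2} dx` on `[-1,1]`. -/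
noncomputable def arcsineMeasure : Measure ℝ :=
  volume.withDensity (fun x =>
    ENNReal.ofReal (Set.indicator (Set.Ioo (-1 : ℝ) 1)
      (fun x => (π * Real.sqrt (1 - x ^ 2))⁻¹) x))

section Aux

open Set ENNReal

/-- One-dimensional change of variables for Lebesgue integrals. -/
lemma aux_lintegral_image {s : Set ℝ} {f f' : ℝ → ℝ}
    (hs : MeasurableSet s) (hf' : ∀ x ∈ s, HasDerivWithinAt f (f' x) s x)
    (hf : Set.InjOn f s) (g : ℝ → ℝ≥0∞) :
    ∫⁻ x in f '' s, g x = ∫⁻ x in s, ENNReal.ofReal |f' x| * g (f x) := by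
  simpa only [ContinuousLinearMap.det_toSpanSingleton] using
    MeasureTheory.lintegral_image_eq_lintegral_abs_det_fderiv_mul volume hs
      (fun x hx => (hf' x hx).hasFDerivWithinAt) hf g

lemma aux_cos_image : Real.cos '' Set.Ioo 0 π = Set.Ioo (-1 : ℝ) 1 := by
  ext x
  constructor
  · rintro ⟨θ, hθ, rfl⟩
    have h1 : Real.cos θ < Real.cos 0 :=
      Real.strictAntiOn_cos ⟨le_refl 0, Real.pi_pos.le⟩ ⟨hθ.1.le, hθ.2.le⟩ hθ.1
    have h2 : Real.cos π < Real.cos θ :=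
      Real.strictAntiOn_cos ⟨hθ.1.le, hθ.2.le⟩ ⟨Real.pi_pos.le, le_refl π⟩ hθ.2
    rw [Real.cos_zero] at h1
    rw [Real.cos_pi] at h2
    exact ⟨h2, h1⟩
  · intro hx
    refine ⟨Real.arccos x, ⟨?_, ?_⟩, Real.cos_arccos hx.1.le hx.2.le⟩
    · rcases lt_or_eq_of_le (Real.arccos_nonneg x) with h | h
      · exact h
      · exact absurd (Real.arccos_eq_zero.mp h.symm) (by linarith [hx.2])
    · rcases lt_or_eq_of_le (Real.arccos_le_pi x) with h | h
      · exact h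
      · exact absurd (Real.arccos_eq_pi.mp h) (by linarith [hx.1])

/-- Lower bound `(cos θ - cos θ₀)² π² ≥ sin²θ₀ (θ-θ₀)²`. -/
lemma aux_cos_lower {θ₀ θ : ℝ} (h0 : 0 < θ₀) (h2 : θ₀ ≤ π / 2)
    (hθ1 : 0 < θ) (hθ2 : θ < π) :
    Real.sin θ₀ ^ 2 * (θ - θ₀) ^ 2 ≤ (Real.cos θ - Real.cos θ₀) ^ 2 * π ^ 2 := by
  have hπ : (0 : ℝ) < π := Real.pi_pos
  -- bound on sin ((θ+θ₀)/2)
  have hhalf : Real.sin θ₀ / 2 ≤ Real.sin (θ₀ / 2) := by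
    have h2m : Real.sin θ₀ = 2 * Real.sin (θ₀ / 2) * Real.cos (θ₀ / 2) := by
      have := Real.sin_two_mul (θ₀ / 2)
      rwa [show 2 * (θ₀ / 2) = θ₀ by ring] at this
    have hc : Real.cos (θ₀ / 2) ≤ 1 := Real.cos_le_one _
    have hs : 0 ≤ Real.sin (θ₀ / 2) :=
      Real.sin_nonneg_of_nonneg_of_le_pi (by linarith) (by linarith)
    nlinarith
  have hv : Real.sin (θ₀ / 2) ≤ Real.sin ((θ + θ₀) / 2) := by
    rcases le_or_gt ((θ + θ₀) / 2) (π / 2) with hle | hgt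
    · rcases eq_or_lt_of_le (show θ₀ / 2 ≤ (θ + θ₀) / 2 by linarith) with he | hlt
      · rw [← he]
      · exact (Real.strictMonoOn_sin ⟨by linarith, by linarith⟩ ⟨by linarith, hle⟩ hlt).le
    · have hsym : Real.sin ((θ + θ₀) / 2) = Real.sin (π - (θ + θ₀) / 2) :=
        (Real.sin_pi_sub _).symm
      rw [hsym]
      rcases eq_or_lt_of_le (show θ₀ / 2 ≤ π - (θ + θ₀) / 2 by linarith) with he | hlt
      · rw [← he]
      · exact (Real.strictMonoOn_sin ⟨by linarith, by linarith⟩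
          ⟨by linarith, by linarith⟩ hlt).le
  have hv0 : Real.sin θ₀ / 2 ≤ Real.sin ((θ + θ₀) / 2) := hhalf.trans hv
  -- bound on sin ((θ-θ₀)/2)
  have habsle : |θ - θ₀| ≤ π := by
    rcases abs_cases (θ - θ₀) with ⟨he, _⟩ | ⟨he, _⟩ <;> rw [he] <;> linarith
  have hms := Real.mul_le_sin (x := |θ - θ₀| / 2) (by positivity) (by linarith)
  have habs : |θ - θ₀| / π ≤ Real.sin (|θ - θ₀| / 2) :=
    calc |θ - θ₀| / π = 2 / π * (|θ - θ₀| / 2) := by ring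
    _ ≤ Real.sin (|θ - θ₀| / 2) := hms
  have hsq : (θ - θ₀) ^ 2 / π ^ 2 ≤ Real.sin ((θ - θ₀) / 2) ^ 2 := by
    have h1 : Real.sin (|θ - θ₀| / 2) ^ 2 = Real.sin ((θ - θ₀) / 2) ^ 2 := by
      rcases abs_cases (θ - θ₀) with ⟨he, _⟩ | ⟨he, _⟩
      · rw [he]
      · rw [he, show -(θ - θ₀) / 2 = -((θ - θ₀) / 2) by ring, Real.sin_neg]
        ring
    have h0' : 0 ≤ |θ - θ₀| / π := by positivity
    have hmm := mul_self_le_mul_self h0' habs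
    calc (θ - θ₀) ^ 2 / π ^ 2 = (|θ - θ₀| / π) * (|θ - θ₀| / π) := by
          rw [div_mul_div_comm, ← sq_abs (θ - θ₀)]; ring
    _ ≤ Real.sin (|θ - θ₀| / 2) * Real.sin (|θ - θ₀| / 2) := hmm
    _ = Real.sin ((θ - θ₀) / 2) ^ 2 := by rw [← h1]; ring
  have hvsq : Real.sin θ₀ ^ 2 / 4 ≤ Real.sin ((θ + θ₀) / 2) ^ 2 := by
    have hs0 : 0 ≤ Real.sin θ₀ / 2 := by
      have := Real.sin_nonneg_of_nonneg_of_le_pi (le_of_lt h0) (by linarith)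
      linarith
    have := mul_self_le_mul_self hs0 hv0
    nlinarith [this]
  rw [Real.cos_sub_cos]
  have expand : (-2 * Real.sin ((θ + θ₀) / 2) * Real.sin ((θ - θ₀) / 2)) ^ 2
      = 4 * Real.sin ((θ + θ₀) / 2) ^ 2 * Real.sin ((θ - θ₀) / 2) ^ 2 := by ring
  rw [expand]
  have h1 : Real.sin θ₀ ^ 2 / 4 * ((θ - θ₀) ^ 2 / π ^ 2)
      ≤ Real.sin ((θ + θ₀) / 2) ^ 2 * Real.sin ((θ - θ₀) / 2) ^ 2 :=
    mul_le_mul hvsq hsq (by positivity) (by positivity)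
  calc Real.sin θ₀ ^ 2 * (θ - θ₀) ^ 2
      = Real.sin θ₀ ^ 2 / 4 * ((θ - θ₀) ^ 2 / π ^ 2) * (4 * π ^ 2) := by
        field_simp
  _ ≤ Real.sin ((θ + θ₀) / 2) ^ 2 * Real.sin ((θ - θ₀) / 2) ^ 2 * (4 * π ^ 2) :=
      mul_le_mul_of_nonneg_right h1 (by positivity)
  _ = 4 * Real.sin ((θ + θ₀) / 2) ^ 2 * Real.sin ((θ - θ₀) / 2) ^ 2 * π ^ 2 := by ring

/-- The key pointwise bound for the substituted integrand. -/
lemma aux_pointwise {n : ℝ} (hn : 1 ≤ n) {θ₀ θ d : ℝ} (h0 : 0 < θ₀) (h2 : θ₀ ≤ π / 2)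
    (hθ1 : 0 < θ) (hθ2 : θ < π) (hzero : Real.cos (n * θ₀) = 0)
    (hd : d ^ 2 * Real.sin θ₀ ^ 2 = n ^ 2) :
    Real.sin θ * ((π * Real.sin θ)⁻¹
        * (Real.cos (n * θ) / (d * (Real.cos θ - Real.cos θ₀))) ^ 2)
      ≤ 2 * π / (1 + (n * (θ - θ₀)) ^ 2) := by
  have hπ : (0 : ℝ) < π := Real.pi_pos
  have hsθ : 0 < Real.sin θ := Real.sin_pos_of_pos_of_lt_pi hθ1 hθ2
  have hE : (0 : ℝ) < 1 + (n * (θ - θ₀)) ^ 2 := by positivity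
  set A : ℝ := (Real.cos (n * θ) / (d * (Real.cos θ - Real.cos θ₀))) ^ 2 with hA
  have hA0 : 0 ≤ A := sq_nonneg _
  have hL : Real.sin θ * ((π * Real.sin θ)⁻¹ * A) = A / π := by
    field_simp
  rw [hL, div_le_div_iff₀ hπ hE]
  have main : A * (1 + (n * (θ - θ₀)) ^ 2) ≤ 2 * π ^ 2 := by
    rcases eq_or_ne (d * (Real.cos θ - Real.cos θ₀)) 0 with hD | hD
    · have hA' : A = 0 := by rw [hA, hD, _root_.div_zero]; norm_num
      rw [hA', zero_mul]; positivity
    · have hD2 : 0 < (d * (Real.cos θ - Real.cos θ₀)) ^ 2 := by positivity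
      have hkey0 := aux_cos_lower h0 h2 hθ1 hθ2
      have key1 : n ^ 2 * (θ - θ₀) ^ 2
          ≤ π ^ 2 * (d * (Real.cos θ - Real.cos θ₀)) ^ 2 := by
        have e : n ^ 2 * (θ - θ₀) ^ 2 = d ^ 2 * (Real.sin θ₀ ^ 2 * (θ - θ₀) ^ 2) := by
          rw [← hd]; ring
        have h1 := mul_le_mul_of_nonneg_left hkey0 (sq_nonneg d)
        calc n ^ 2 * (θ - θ₀) ^ 2 = d ^ 2 * (Real.sin θ₀ ^ 2 * (θ - θ₀) ^ 2) := e
        _ ≤ d ^ 2 * ((Real.cos θ - Real.cos θ₀) ^ 2 * π ^ 2) := h1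
        _ = π ^ 2 * (d * (Real.cos θ - Real.cos θ₀)) ^ 2 := by ring
      have key2 : Real.cos (n * θ) ^ 2 ≤ n ^ 2 * (θ - θ₀) ^ 2 := by
        have hc : Real.cos (n * θ)
            = -2 * Real.sin ((n * θ + n * θ₀) / 2) * Real.sin ((n * θ - n * θ₀) / 2) := by
          rw [← Real.cos_sub_cos, hzero, sub_zero]
        rw [hc]
        have hb1 : Real.sin ((n * θ + n * θ₀) / 2) ^ 2 ≤ 1 := Real.sin_sq_le_one _
        have hb2 : Real.sin ((n * θ - n * θ₀) / 2) ^ 2 ≤ ((n * θ - n * θ₀) / 2) ^ 2 :=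
          Real.sin_sq_le_sq
        have hb3 := mul_le_mul_of_nonneg_right hb1
          (sq_nonneg (Real.sin ((n * θ - n * θ₀) / 2)))
        nlinarith [hb2, hb3]
      have key3 : Real.cos (n * θ) ^ 2 ≤ 1 := Real.cos_sq_le_one _
      have hAval : A = Real.cos (n * θ) ^ 2 / (d * (Real.cos θ - Real.cos θ₀)) ^ 2 := by
        rw [hA, div_pow]
      rw [hAval, div_mul_eq_mul_div, div_le_iff₀ hD2]
      have hmul : Real.cos (n * θ) ^ 2 * (n ^ 2 * (θ - θ₀) ^ 2)
          ≤ 1 * (n ^ 2 * (θ - θ₀) ^ 2) :=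
        mul_le_mul_of_nonneg_right key3 (by positivity)
      nlinarith [key1, key2, hmul]
  nlinarith [main]

lemma aux_integrable {n : ℝ} (hn : 0 < n) (θ₀ : ℝ) :
    Integrable (fun θ : ℝ => 2 * π / (1 + (n * (θ - θ₀)) ^ 2)) := by
  have h1 : Integrable (fun t : ℝ => (1 + t ^ 2)⁻¹) := integrable_inv_one_add_sq
  have h2 : Integrable (fun t : ℝ => (1 + (n * t) ^ 2)⁻¹) :=
    h1.comp_mul_left' hn.ne'
  have h3 : Integrable (fun θ : ℝ => (1 + (n * (θ - θ₀)) ^ 2)⁻¹) :=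
    h2.comp_sub_right θ₀
  simpa [div_eq_mul_inv] using h3.const_mul (2 * π)

lemma aux_integral {n : ℝ} (hn : 0 < n) (θ₀ : ℝ) :
    ∫ θ : ℝ, 2 * π / (1 + (n * (θ - θ₀)) ^ 2) = 2 * π ^ 2 / n := by
  have h1 : (∫ θ : ℝ, (1 + (n * (θ - θ₀)) ^ 2)⁻¹)
      = ∫ t : ℝ, (1 + (n * t) ^ 2)⁻¹ :=
    integral_sub_right_eq_self (fun t : ℝ => (1 + (n * t) ^ 2)⁻¹) θ₀
  have h2 : (∫ t : ℝ, (1 + (n * t) ^ 2)⁻¹) = |n⁻¹| • ∫ t : ℝ, (1 + t ^ 2)⁻¹ :=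
    MeasureTheory.Measure.integral_comp_mul_left (fun t : ℝ => (1 + t ^ 2)⁻¹) n
  have h3 : (∫ θ : ℝ, 2 * π / (1 + (n * (θ - θ₀)) ^ 2))
      = 2 * π * ∫ θ : ℝ, (1 + (n * (θ - θ₀)) ^ 2)⁻¹ := by
    simp_rw [div_eq_mul_inv]
    exact MeasureTheory.integral_const_mul (2 * π) _
  rw [h3, h1, h2, integral_univ_inv_one_add_sq, abs_of_pos (inv_pos.mpr hn),
    smul_eq_mul, eq_div_iff hn.ne']
  field_simp

end Aux

/-- There is a universal constant `C` such that for every `n₀ ≥ 1` and every zero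
`x₀ = cos θ₀` of `T n₀` with `0 < θ₀ ≤ π/2`, the Lagrange polynomial
`R(x) = T n₀(x)/(T n₀'(x₀)(x - x₀))` satisfies `∫ R² dσ₁ ≤ C/n₀`. -/
theorem arcsine_lagrange_sq_integral_bound :
    ∃ C : ℝ, 0 < C ∧
      ∀ n₀ : ℕ, 1 ≤ n₀ → ∀ θ₀ : ℝ, 0 < θ₀ → θ₀ ≤ π / 2 →
        (Polynomial.Chebyshev.T ℝ n₀).eval (Real.cos θ₀) = 0 →
        ∫ x, ((Polynomial.Chebyshev.T ℝ n₀).eval x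
            / ((Polynomial.derivative (Polynomial.Chebyshev.T ℝ n₀)).eval (Real.cos θ₀)
                * (x - Real.cos θ₀))) ^ 2 ∂arcsineMeasure
          ≤ C / n₀ := by
  refine ⟨2 * π ^ 2, by positivity, ?_⟩
  intro n₀ hn₀ θ₀ h0 h2 heval
  have hπ : (0 : ℝ) < π := Real.pi_pos
  have hn1 : (1 : ℝ) ≤ (n₀ : ℝ) := by exact_mod_cast hn₀
  have hn0 : (0 : ℝ) < (n₀ : ℝ) := zero_lt_one.trans_le hn1
  set x₀ : ℝ := Real.cos θ₀ with hx₀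
  set P : Polynomial ℝ := Polynomial.Chebyshev.T ℝ (n₀ : ℤ) with hP
  set d : ℝ := (Polynomial.derivative P).eval x₀ with hd_def
  set h : ℝ → ℝ := fun x => (P.eval x / (d * (x - x₀))) ^ 2 with hh
  -- cos (n θ₀) = 0
  have hzero : Real.cos ((n₀ : ℝ) * θ₀) = 0 := by
    have ht := Polynomial.Chebyshev.T_real_cos θ₀ (n₀ : ℤ)
    rw [hP, hx₀] at heval
    rw [heval] at ht
    have := ht.symm
    push_cast at this
    exact this
  -- d² sin²θ₀ = n²
  have hdeval : d = (n₀ : ℝ) * Polynomial.eval x₀ (Polynomial.Chebyshev.U ℝ ((n₀ : ℤ) - 1)) := by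
    rw [hd_def, hP, Polynomial.Chebyshev.T_derivative_eq_U, Polynomial.eval_mul,
      Polynomial.eval_intCast]
    push_cast
    ring
  have hdsin : d * Real.sin θ₀ = (n₀ : ℝ) * Real.sin ((n₀ : ℝ) * θ₀) := by
    have hU := Polynomial.Chebyshev.U_real_cos θ₀ ((n₀ : ℤ) - 1)
    have harg : ((((n₀ : ℤ) - 1 : ℤ) : ℝ) + 1) * θ₀ = (n₀ : ℝ) * θ₀ := by push_cast; ring
    rw [hdeval, hx₀, mul_assoc, hU, harg]
  have hd2 : d ^ 2 * Real.sin θ₀ ^ 2 = (n₀ : ℝ) ^ 2 := by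
    have hsq := congrArg (fun t : ℝ => t ^ 2) hdsin
    simp only [mul_pow] at hsq
    have hpyth := Real.sin_sq_add_cos_sq ((n₀ : ℝ) * θ₀)
    rw [hzero] at hpyth
    have hs1 : Real.sin ((n₀ : ℝ) * θ₀) ^ 2 = 1 := by nlinarith [hpyth]
    rw [hsq, hs1, mul_one]
  -- measurability
  have hmeas : Measurable h := by
    apply Measurable.pow_const
    exact (P.continuous.measurable).div
      (measurable_const.mul (measurable_id.sub measurable_const))
  have hdens : Measurable (fun x : ℝ =>
      ENNReal.ofReal (Set.indicator (Set.Ioo (-1 : ℝ) 1)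
        (fun x => (π * Real.sqrt (1 - x ^ 2))⁻¹) x)) := by
    apply Measurable.ennreal_ofReal
    apply Measurable.indicator _ measurableSet_Ioo
    apply Measurable.inv
    exact measurable_const.mul ((Real.continuous_sqrt.measurable).comp
      (measurable_const.sub (measurable_id.pow_const 2)))
  have hinj : Set.InjOn Real.cos (Set.Ioo 0 π) :=
    Real.injOn_cos.mono Set.Ioo_subset_Icc_self
  have hderiv : ∀ x ∈ Set.Ioo (0 : ℝ) π,
      HasDerivWithinAt Real.cos (-Real.sin x) (Set.Ioo 0 π) x :=
    fun x _ => (Real.hasDerivAt_cos x).hasDerivWithinAt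
  -- the key lintegral bound
  have key : (∫⁻ x, ENNReal.ofReal (h x) ∂arcsineMeasure)
      ≤ ENNReal.ofReal (2 * π ^ 2 / (n₀ : ℝ)) := by
    have e0 : (∫⁻ x, ENNReal.ofReal (h x) ∂arcsineMeasure)
        = ∫⁻ x in Set.Ioo (-1 : ℝ) 1,
            ENNReal.ofReal ((π * Real.sqrt (1 - x ^ 2))⁻¹ * h x) ∂volume := by
      unfold arcsineMeasure
      rw [lintegral_withDensity_eq_lintegral_mul _ hdens hmeas.ennreal_ofReal,
        ← lintegral_indicator measurableSet_Ioo]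
      apply lintegral_congr
      intro x
      simp only [Pi.mul_apply]
      by_cases hx : x ∈ Set.Ioo (-1 : ℝ) 1
      · rw [Set.indicator_of_mem hx, Set.indicator_of_mem hx,
          ENNReal.ofReal_mul (by positivity : (0:ℝ) ≤ (π * Real.sqrt (1 - x ^ 2))⁻¹)]
      · rw [Set.indicator_of_notMem hx, Set.indicator_of_notMem hx]
        simp
    rw [e0, ← aux_cos_image, aux_lintegral_image measurableSet_Ioo hderiv hinj]
    have hboundmeas : Measurable (fun θ : ℝ =>
        ENNReal.ofReal (2 * π / (1 + ((n₀ : ℝ) * (θ - θ₀)) ^ 2))) :=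
      (measurable_const.div ((measurable_const.add
        ((measurable_const.mul (measurable_id.sub measurable_const)).pow_const
          2)))).ennreal_ofReal
    refine le_trans (setLIntegral_mono hboundmeas ?_) ?_
    · intro θ hθ
      have hsθ : 0 < Real.sin θ := Real.sin_pos_of_pos_of_lt_pi hθ.1 hθ.2
      have habs : |(-Real.sin θ)| = Real.sin θ := by rw [abs_neg, abs_of_pos hsθ]
      have hsqrt : Real.sqrt (1 - Real.cos θ ^ 2) = Real.sin θ := by
        rw [show (1 : ℝ) - Real.cos θ ^ 2 = Real.sin θ ^ 2 by
          nlinarith [Real.sin_sq_add_cos_sq θ]]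
        exact Real.sqrt_sq hsθ.le
      rw [habs, hsqrt, ← ENNReal.ofReal_mul hsθ.le]
      apply ENNReal.ofReal_le_ofReal
      have hPeval : Polynomial.eval (Real.cos θ) P = Real.cos ((n₀ : ℝ) * θ) := by
        rw [hP]
        have := Polynomial.Chebyshev.T_real_cos θ (n₀ : ℤ)
        push_cast at this
        exact this
      simp only [hh, hx₀]
      rw [hPeval]
      exact aux_pointwise hn1 h0 h2 hθ.1 hθ.2 hzero hd2
    · refine le_trans (setLIntegral_le_lintegral _ _) ?_
      rw [← ofReal_integral_eq_lintegral_ofReal (aux_integrable hn0 θ₀)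
        (ae_of_all _ fun θ => by positivity), aux_integral hn0 θ₀]
  -- conclude
  have hnonneg : 0 ≤ᵐ[arcsineMeasure] h := ae_of_all _ fun x => sq_nonneg _
  rw [integral_eq_lintegral_of_nonneg_ae hnonneg hmeas.aestronglyMeasurable]
  have hfin := ENNReal.toReal_mono ENNReal.ofReal_ne_top key
  rwa [ENNReal.toReal_ofReal (by positivity)] at hfin
end

section
/- For |θ - θ₀| ≤ π/(3n₀), where cos θ₀ is a zero of T_{n₀} with 0 < θ₀ ≤ π/2 and 0 ≤ θ ≤ π, one has |T_{n₀}'(cos θ)| ≥ |T_{n₀}'(cos θ₀)|/C for a universal constant C, i.e., n₀·|sin(n₀θ)|/sin θ ≥ (n₀/sin θ₀)/C. -/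
open Polynomial Real

lemma cheb_deriv_eval_cos (n : ℕ) (θ : ℝ) :
    (Polynomial.derivative (Polynomial.Chebyshev.T ℝ n)).eval (Real.cos θ) * Real.sin θ
      = (n : ℝ) * Real.sin ((n : ℝ) * θ) := by
  have h := Polynomial.Chebyshev.T_derivative_eq_U (R := ℝ) (n : ℤ)
  rw [h]
  have hU := Polynomial.Chebyshev.U_real_cos θ ((n : ℤ) - 1)
  have : ((((n : ℤ) - 1 : ℤ) : ℝ) + 1) = (n : ℝ) := by push_cast; ring
  rw [this] at hU
  simp only [Polynomial.eval_mul, Polynomial.eval_intCast]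
  push_cast
  rw [mul_assoc, hU]

set_option maxHeartbeats 1600000 in
/-- Near a zero `cos θ₀` of `T n₀` (with `0 < θ₀ ≤ π/2`), the derivative of `T n₀`
stays comparable to its value at the zero: there is a universal constant `C > 0`
such that for `0 ≤ θ ≤ π` with `|θ - θ₀| ≤ π/(3n₀)`,
`|T n₀'(cos θ)| ≥ |T n₀'(cos θ₀)|/C`. -/
theorem chebyshev_T_deriv_lower_bound_near_zero :
    ∃ C : ℝ, 0 < C ∧
      ∀ n₀ : ℕ, 1 ≤ n₀ → ∀ θ₀ θ : ℝ,
        0 < θ₀ → θ₀ ≤ π / 2 →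
        (Polynomial.Chebyshev.T ℝ n₀).eval (Real.cos θ₀) = 0 →
        0 ≤ θ → θ ≤ π → |θ - θ₀| ≤ π / (3 * n₀) →
        |(Polynomial.derivative (Polynomial.Chebyshev.T ℝ n₀)).eval (Real.cos θ₀)| / C
          ≤ |(Polynomial.derivative (Polynomial.Chebyshev.T ℝ n₀)).eval (Real.cos θ)| := by
  refine ⟨6, by norm_num, ?_⟩
  intro n₀ hn₀ θ₀ θ hθ₀pos hθ₀le hzero hθ0 hθπ hclose
  have hN : (1 : ℝ) ≤ (n₀ : ℝ) := by exact_mod_cast hn₀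
  have hNpos : (0 : ℝ) < (n₀ : ℝ) := by linarith
  have hπ := Real.pi_pos
  have hπlt : π < 3.15 := Real.pi_lt_d2
  -- cos (n θ₀) = 0
  have hcos0 : Real.cos ((n₀ : ℝ) * θ₀) = 0 := by
    have h := Polynomial.Chebyshev.T_real_cos θ₀ (n₀ : ℤ)
    push_cast at h
    rw [h] at hzero
    exact hzero
  -- n θ₀ ≥ π/2
  have hNθ₀ : π / 2 ≤ (n₀ : ℝ) * θ₀ := by
    by_contra hlt
    push_neg at hlt
    have : 0 < Real.cos ((n₀ : ℝ) * θ₀) := by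
      apply Real.cos_pos_of_mem_Ioo
      constructor <;> nlinarith
    linarith [this.ne', hcos0]
  -- θ₀ ≥ π/(2 n₀)
  have hθ₀ge : π / (2 * (n₀ : ℝ)) ≤ θ₀ := by
    rw [div_le_iff₀ (by positivity)]
    nlinarith
  have hclose' : |θ - θ₀| ≤ π / (3 * (n₀ : ℝ)) := by exact_mod_cast hclose
  have habs := abs_le.mp hclose'
  have hdiv : π / (3 * (n₀ : ℝ)) = π / (3 * (n₀ : ℝ)) := rfl
  -- bounds on θ
  have hθlt : θ ≤ 5 / 3 * θ₀ := by
    have h1 : θ ≤ θ₀ + π / (3 * (n₀ : ℝ)) := by linarith [habs.2]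
    have h2 : π / (3 * (n₀ : ℝ)) ≤ 2 / 3 * θ₀ := by
      rw [div_le_iff₀ (by positivity)]
      nlinarith
    linarith
  have hθpos : 0 < θ := by
    have h2 : π / (3 * (n₀ : ℝ)) < π / (2 * (n₀ : ℝ)) :=
      div_lt_div_of_pos_left hπ (by positivity) (by nlinarith)
    linarith [habs.1]
  have hθltπ : θ < π := by nlinarith
  have hsθ : 0 < Real.sin θ := Real.sin_pos_of_pos_of_lt_pi hθpos hθltπ
  have hsθ₀ : 0 < Real.sin θ₀ := Real.sin_pos_of_pos_of_lt_pi hθ₀pos (by linarith)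
  -- |sin (n θ₀)| = 1
  have hsin0 : Real.sin ((n₀ : ℝ) * θ₀) = 1 ∨ Real.sin ((n₀ : ℝ) * θ₀) = -1 := by
    have := Real.sin_sq_add_cos_sq ((n₀ : ℝ) * θ₀)
    rw [hcos0] at this
    have h1 : Real.sin ((n₀ : ℝ) * θ₀) ^ 2 = 1 := by simpa using this
    rw [pow_two] at h1
    rcases mul_self_eq_one_iff.mp h1 with h | h
    · exact Or.inl h
    · exact Or.inr h
  -- |sin (n θ)| ≥ 1/2
  have hsinθ : 1 / 2 ≤ |Real.sin ((n₀ : ℝ) * θ)| := by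
    have hδ : |(n₀ : ℝ) * θ - (n₀ : ℝ) * θ₀| ≤ π / 3 := by
      rw [← mul_sub, abs_mul, abs_of_pos hNpos]
      calc (n₀ : ℝ) * |θ - θ₀| ≤ (n₀ : ℝ) * (π / (3 * (n₀ : ℝ))) := by
            exact mul_le_mul_of_nonneg_left hclose' (le_of_lt hNpos)
        _ = π / 3 := by field_simp
    set δ := (n₀ : ℝ) * θ - (n₀ : ℝ) * θ₀ with hδdef
    have hexp : Real.sin ((n₀ : ℝ) * θ) = Real.sin ((n₀ : ℝ) * θ₀) * Real.cos δ
        + Real.cos ((n₀ : ℝ) * θ₀) * Real.sin δ := by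
      have : (n₀ : ℝ) * θ = (n₀ : ℝ) * θ₀ + δ := by ring
      rw [this, Real.sin_add]
    rw [hexp, hcos0, zero_mul, add_zero, abs_mul]
    have h1 : |Real.sin ((n₀ : ℝ) * θ₀)| = 1 := by rcases hsin0 with h | h <;> rw [h] <;> norm_num
    rw [h1, one_mul]
    have hcδ : 1 / 2 ≤ Real.cos δ := by
      have : Real.cos (π / 3) ≤ Real.cos |δ| := by
        apply Real.cos_le_cos_of_nonneg_of_le_pi (abs_nonneg δ) (by linarith)
        exact hδ
      rw [Real.cos_pi_div_three, Real.cos_abs] at this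
      exact this
    calc (1:ℝ)/2 ≤ Real.cos δ := hcδ
      _ ≤ |Real.cos δ| := le_abs_self _
  -- sin θ ≤ 3 sin θ₀
  have hsle : Real.sin θ ≤ 3 * Real.sin θ₀ := by
    have h1 : Real.sin θ ≤ θ := Real.sin_le hθ0
    have h2 : 2 / π * θ₀ ≤ Real.sin θ₀ := Real.mul_le_sin (le_of_lt hθ₀pos) hθ₀le
    have h3 : 2 * θ₀ ≤ π * Real.sin θ₀ := by
      have := mul_le_mul_of_nonneg_left h2 hπ.le
      field_simp at this
      linarith
    nlinarith [hsθ₀]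
  -- evaluate derivatives
  have hD₀ := cheb_deriv_eval_cos n₀ θ₀
  have hDθ := cheb_deriv_eval_cos n₀ θ
  set D₀ := (Polynomial.derivative (Polynomial.Chebyshev.T ℝ n₀)).eval (Real.cos θ₀)
  set Dθ := (Polynomial.derivative (Polynomial.Chebyshev.T ℝ n₀)).eval (Real.cos θ)
  have habsD₀ : |D₀| = (n₀ : ℝ) / Real.sin θ₀ := by
    have : D₀ = (n₀ : ℝ) * Real.sin ((n₀ : ℝ) * θ₀) / Real.sin θ₀ := by
      field_simp at hD₀ ⊢
      linarith [hD₀]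
    rw [this, abs_div, abs_mul, abs_of_pos hNpos, abs_of_pos hsθ₀]
    rcases hsin0 with h | h <;> rw [h] <;> norm_num
  have habsDθ : |Dθ| = (n₀ : ℝ) * |Real.sin ((n₀ : ℝ) * θ)| / Real.sin θ := by
    have : Dθ = (n₀ : ℝ) * Real.sin ((n₀ : ℝ) * θ) / Real.sin θ := by
      field_simp at hDθ ⊢
      linarith [hDθ]
    rw [this, abs_div, abs_mul, abs_of_pos hNpos, abs_of_pos hsθ]
  rw [habsD₀, habsDθ]
  rw [div_div, div_le_div_iff₀ (by positivity) hsθ]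
  have key : Real.sin θ ≤ 6 * |Real.sin ((n₀ : ℝ) * θ)| * Real.sin θ₀ := by
    have h4 := mul_le_mul_of_nonneg_left hsinθ
      (by positivity : (0:ℝ) ≤ 6 * Real.sin θ₀)
    ring_nf at h4 ⊢
    linarith [hsle]
  have h5 := mul_le_mul_of_nonneg_left key (le_of_lt hNpos)
  ring_nf at h5 ⊢
  linarith
end
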